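/- In the theory M⁻ (Extensionality, Emptyset, Pair, Union, Set difference, TCo, Infinity, Δ0-Separation, Set-foundation), the scheme of Σ-Foundation on ω for a class of formulas follows from Foundation on ω for the dual Π class, given Δ0^P-Collection; concretely in a model-theoretic form: if M is a model of M⁻ + Δ0^P-Collection in which every nonempty Π1^P-definable (with parameters) subclass of ω^M has an E-least element, then every nonempty Σ1^P-definable (with parameters) subclass of ω^M has an E-least element. -/
import Mathlib


universe u

/-- de Bruijn-style formulas of the language of set theory, with primitive
bounded quantifiers (`∈`-bounded and `⊆`-bounded) and unbounded quantifiers.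
`SF n` is the type of formulas with (at most) `n` free variables. -/
inductive SF : ℕ → Type
  | mem {n} (i j : Fin n) : SF n
  | eq {n} (i j : Fin n) : SF n
  | not {n} (φ : SF n) : SF n
  | and {n} (φ ψ : SF n) : SF n
  | or {n} (φ ψ : SF n) : SF n
  | bexMem {n} (i : Fin n) (φ : SF (n + 1)) : SF n
  | ballMem {n} (i : Fin n) (φ : SF (n + 1)) : SF n
  | bexSub {n} (i : Fin n) (φ : SF (n + 1)) : SF n
  | ballSub {n} (i : Fin n) (φ : SF (n + 1)) : SF n
  | ex {n} (φ : SF (n + 1)) : SF n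
  | all {n} (φ : SF (n + 1)) : SF n

variable {X : Type u}

/-- `a ⊆ b` in the structure `⟨X, E⟩`. -/
def SubE (E : X → X → Prop) (a b : X) : Prop := ∀ z, E z a → E z b

/-- Satisfaction of a formula in the structure `⟨X, E⟩` under a valuation. -/
def SF.Eval (E : X → X → Prop) : {n : ℕ} → SF n → (Fin n → X) → Prop
  | _, .mem i j, v => E (v i) (v j)
  | _, .eq i j, v => v i = v j
  | _, .not φ, v => ¬ φ.Eval E v
  | _, .and φ ψ, v => φ.Eval E v ∧ ψ.Eval E v
  | _, .or φ ψ, v => φ.Eval E v ∨ ψ.Eval E v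
  | _, .bexMem i φ, v => ∃ x, E x (v i) ∧ φ.Eval E (Fin.snoc v x)
  | _, .ballMem i φ, v => ∀ x, E x (v i) → φ.Eval E (Fin.snoc v x)
  | _, .bexSub i φ, v => ∃ x, SubE E x (v i) ∧ φ.Eval E (Fin.snoc v x)
  | _, .ballSub i φ, v => ∀ x, SubE E x (v i) → φ.Eval E (Fin.snoc v x)
  | _, .ex φ, v => ∃ x, φ.Eval E (Fin.snoc v x)
  | _, .all φ, v => ∀ x, φ.Eval E (Fin.snoc v x)

/-- `Δ₀` formulas: only `∈`-bounded quantifiers. -/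
def SF.IsDelta0 : {n : ℕ} → SF n → Prop
  | _, .mem _ _ => True
  | _, .eq _ _ => True
  | _, .not φ => φ.IsDelta0
  | _, .and φ ψ => φ.IsDelta0 ∧ ψ.IsDelta0
  | _, .or φ ψ => φ.IsDelta0 ∧ ψ.IsDelta0
  | _, .bexMem _ φ => φ.IsDelta0
  | _, .ballMem _ φ => φ.IsDelta0
  | _, .bexSub _ _ => False
  | _, .ballSub _ _ => False
  | _, .ex _ => False
  | _, .all _ => False

/-- Takahashi's class `Δ₀^𝒫`: only `∈`-bounded and `⊆`-bounded quantifiers. -/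
def SF.IsDelta0P : {n : ℕ} → SF n → Prop
  | _, .mem _ _ => True
  | _, .eq _ _ => True
  | _, .not φ => φ.IsDelta0P
  | _, .and φ ψ => φ.IsDelta0P ∧ ψ.IsDelta0P
  | _, .or φ ψ => φ.IsDelta0P ∧ ψ.IsDelta0P
  | _, .bexMem _ φ => φ.IsDelta0P
  | _, .ballMem _ φ => φ.IsDelta0P
  | _, .bexSub _ φ => φ.IsDelta0P
  | _, .ballSub _ φ => φ.IsDelta0P
  | _, .ex _ => False
  | _, .all _ => False

def Delta0C : ∀ n, SF n → Prop := fun _ φ => φ.IsDelta0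
def Delta0PC : ∀ n, SF n → Prop := fun _ φ => φ.IsDelta0P
def Sigma1C : ∀ n, SF n → Prop := fun _ φ => ∃ ψ, ψ.IsDelta0 ∧ φ = SF.ex ψ
def Pi1C : ∀ n, SF n → Prop := fun _ φ => ∃ ψ, ψ.IsDelta0 ∧ φ = SF.all ψ
def Sigma1PC : ∀ n, SF n → Prop := fun _ φ => ∃ ψ, ψ.IsDelta0P ∧ φ = SF.ex ψ
def Pi1PC : ∀ n, SF n → Prop := fun _ φ => ∃ ψ, ψ.IsDelta0P ∧ φ = SF.all ψ
def FullC : ∀ n, SF n → Prop := fun _ _ => True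

/-- A Gödel numbering of formulas. -/
def SF.encode : {n : ℕ} → SF n → ℕ
  | _, .mem i j => Nat.pair 0 (Nat.pair i.val j.val)
  | _, .eq i j => Nat.pair 1 (Nat.pair i.val j.val)
  | _, .not φ => Nat.pair 2 φ.encode
  | _, .and φ ψ => Nat.pair 3 (Nat.pair φ.encode ψ.encode)
  | _, .or φ ψ => Nat.pair 4 (Nat.pair φ.encode ψ.encode)
  | _, .bexMem i φ => Nat.pair 5 (Nat.pair i.val φ.encode)
  | _, .ballMem i φ => Nat.pair 6 (Nat.pair i.val φ.encode)
  | _, .bexSub i φ => Nat.pair 7 (Nat.pair i.val φ.encode)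
  | _, .ballSub i φ => Nat.pair 8 (Nat.pair i.val φ.encode)
  | _, .ex φ => Nat.pair 9 φ.encode
  | _, .all φ => Nat.pair 10 φ.encode

/-- A theory (set of sentences) is recursively enumerable if the set of Gödel
numbers of its members is the domain of a partial recursive function. -/
def REset (S : Set (SF 0)) : Prop :=
  ∃ f : ℕ →. ℕ, Nat.Partrec f ∧ ∀ φ : SF 0, φ ∈ S ↔ SF.encode φ ∈ f.Dom

/-- `⟨X, E⟩ ⊨ S` for a set `S` of sentences. -/
def SatT (E : X → X → Prop) (S : Set (SF 0)) : Prop :=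
  ∀ φ ∈ S, SF.Eval E φ (fun i => i.elim0)

/-! ## Axioms and axiom schemes -/

def ExtensionalityAx (E : X → X → Prop) : Prop := ∀ a b, (∀ z, E z a ↔ E z b) → a = b
def EmptySetAx (E : X → X → Prop) : Prop := ∃ a, ∀ z, ¬ E z a
def PairAx (E : X → X → Prop) : Prop := ∀ x y, ∃ a, ∀ z, E z a ↔ (z = x ∨ z = y)
def UnionAx (E : X → X → Prop) : Prop := ∀ a, ∃ b, ∀ z, E z b ↔ ∃ y, E y a ∧ E z y
def SetDiffAx (E : X → X → Prop) : Prop := ∀ a b, ∃ c, ∀ z, E z c ↔ (E z a ∧ ¬ E z b)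
def PowerAx (E : X → X → Prop) : Prop := ∀ a, ∃ p, ∀ z, E z p ↔ SubE E z a
def TransSet (E : X → X → Prop) (t : X) : Prop := ∀ y, E y t → ∀ z, E z y → E z t
def TCoAx (E : X → X → Prop) : Prop := ∀ a, ∃ t, TransSet E t ∧ SubE E a t
def SuccOf (E : X → X → Prop) (x s : X) : Prop := ∀ z, E z s ↔ (E z x ∨ z = x)
def InductiveSet (E : X → X → Prop) (a : X) : Prop :=
  (∃ e, E e a ∧ ∀ z, ¬ E z e) ∧ ∀ x, E x a → ∃ s, E s a ∧ SuccOf E x s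
def InfinityAx (E : X → X → Prop) : Prop := ∃ a, InductiveSet E a
def SetFoundationAx (E : X → X → Prop) : Prop :=
  ∀ z, (∃ x, E x z) → ∃ y, E y z ∧ ∀ x, E x y → ¬ E x z
/-- The axiom of choice: every set of pairwise disjoint nonempty sets has a transversal. -/
def ACAx (E : X → X → Prop) : Prop :=
  ∀ a, (∀ x, E x a → ∃ z, E z x) →
    (∀ x y, E x a → E y a → x ≠ y → ∀ z, E z x → ¬ E z y) →
    ∃ c, ∀ x, E x a → ∃! z, E z c ∧ E z x

def SeparationScheme (E : X → X → Prop) (C : ∀ n, SF n → Prop) : Prop :=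
  ∀ (n : ℕ) (φ : SF (n + 1)), C _ φ → ∀ (p : Fin n → X) (w : X),
    ∃ y, ∀ x, E x y ↔ (E x w ∧ φ.Eval E (Fin.snoc p x))

def CollectionScheme (E : X → X → Prop) (C : ∀ n, SF n → Prop) : Prop :=
  ∀ (n : ℕ) (φ : SF (n + 2)), C _ φ → ∀ (p : Fin n → X) (w : X),
    (∀ x, E x w → ∃ y, φ.Eval E (Fin.snoc (Fin.snoc p x) y)) →
    ∃ c, ∀ x, E x w → ∃ y, E y c ∧ φ.Eval E (Fin.snoc (Fin.snoc p x) y)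

def FoundationScheme (E : X → X → Prop) (C : ∀ n, SF n → Prop) : Prop :=
  ∀ (n : ℕ) (φ : SF (n + 1)), C _ φ → ∀ p : Fin n → X,
    (∃ x, φ.Eval E (Fin.snoc p x)) →
    ∃ y, φ.Eval E (Fin.snoc p y) ∧ ∀ x, E x y → ¬ φ.Eval E (Fin.snoc p x)

/-! ## Theories -/

def ModelMminus (E : X → X → Prop) : Prop :=
  ExtensionalityAx E ∧ EmptySetAx E ∧ PairAx E ∧ UnionAx E ∧ SetDiffAx E ∧
    TCoAx E ∧ InfinityAx E ∧ SeparationScheme E Delta0C ∧ SetFoundationAx E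

def ModelM (E : X → X → Prop) : Prop := ModelMminus E ∧ PowerAx E

def ModelKP (E : X → X → Prop) : Prop :=
  ExtensionalityAx E ∧ PairAx E ∧ UnionAx E ∧ SeparationScheme E Delta0C ∧
    CollectionScheme E Delta0C ∧ FoundationScheme E Pi1C

def ModelKPP (E : X → X → Prop) : Prop :=
  ModelM E ∧ CollectionScheme E Delta0PC ∧ FoundationScheme E Pi1PC

def ModelMOST (E : X → X → Prop) : Prop :=
  ModelM E ∧ SeparationScheme E Sigma1C ∧ ACAx E

def ModelZF (E : X → X → Prop) : Prop :=
  ExtensionalityAx E ∧ EmptySetAx E ∧ PairAx E ∧ UnionAx E ∧ PowerAx E ∧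
    InfinityAx E ∧ SeparationScheme E FullC ∧ CollectionScheme E FullC ∧
    FoundationScheme E FullC

/-! ## Internal set-theoretic machinery -/

/-- `p = {{x}, {x, y}}` (Kuratowski pair). -/
def IsPair (E : X → X → Prop) (p x y : X) : Prop :=
  ∀ z, E z p ↔ ((∀ w, E w z ↔ w = x) ∨ (∀ w, E w z ↔ (w = x ∨ w = y)))

def FunApp (E : X → X → Prop) (f x y : X) : Prop := ∃ q, E q f ∧ IsPair E q x y

/-- `f` is a function with domain `d`. -/
def IsFuncOn (E : X → X → Prop) (f d : X) : Prop :=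
  (∀ q, E q f → ∃ x y, IsPair E q x y ∧ E x d) ∧
  (∀ x y y', FunApp E f x y → FunApp E f x y' → y = y') ∧
  (∀ x, E x d → ∃ y, FunApp E f x y)

/-- `f` is an injective function from `dom` into `cod`. -/
def InjFunInto (E : X → X → Prop) (f dom cod : X) : Prop :=
  IsFuncOn E f dom ∧ (∀ x y, FunApp E f x y → E y cod) ∧
  (∀ x x' y, FunApp E f x y → FunApp E f x' y → x = x')

/-- `|t| ≤ |κ|`. -/
def CardLe (E : X → X → Prop) (t κ : X) : Prop := ∃ f, InjFunInto E f t κ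

def IsOrdinal (E : X → X → Prop) (x : X) : Prop :=
  TransSet E x ∧ ∀ y, E y x → TransSet E y

/-- An (initial ordinal =) cardinal: an ordinal that does not inject into any of
its members. -/
def IsCardinal (E : X → X → Prop) (κ : X) : Prop :=
  IsOrdinal E κ ∧ ∀ β, E β κ → ¬ CardLe E κ β

/-- `t` is the transitive closure of the set `x`. -/
def IsTCset (E : X → X → Prop) (t x : X) : Prop :=
  TransSet E t ∧ SubE E x t ∧ ∀ u, TransSet E u → SubE E x u → SubE E t u

/-- `t` is the transitive closure of `{x}`. -/
def IsTCsingleton (E : X → X → Prop) (t x : X) : Prop :=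
  TransSet E t ∧ E x t ∧ ∀ u, TransSet E u → E x u → SubE E t u

def IsOmega (E : X → X → Prop) (w : X) : Prop :=
  InductiveSet E w ∧ ∀ a, InductiveSet E a → SubE E w a

/-- `⟨X, E⟩` is `ω`-standard: its internal natural numbers are order-isomorphic
to the standard natural numbers. -/
def OmegaStandard (E : X → X → Prop) : Prop :=
  ∀ w, IsOmega E w → ∃ f : ℕ → X, (∀ n, E (f n) w) ∧ (∀ x, E x w → ∃ n, x = f n) ∧
    ∀ m n : ℕ, (E (f m) (f n) ↔ m < n)

/-- `f` is (a function coding) the cumulative hierarchy `β ↦ V_β` for `β ∈ α`,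
using `V_β = ⋃_{γ∈β} 𝒫(V_γ)`. -/
def IsRK (E : X → X → Prop) (α f : X) : Prop :=
  IsOrdinal E α ∧ IsFuncOn E f α ∧
  ∀ β vβ, E β α → FunApp E f β vβ →
    ∀ x, E x vβ ↔ ∃ γ, E γ β ∧ ∃ vγ, FunApp E f γ vγ ∧ SubE E x vγ

/-- Internal rank comparison `ρ(x) ≤ ρ(y)`: `x` belongs to every stage of the
cumulative hierarchy that `y` belongs to. -/
def RankLe (E : X → X → Prop) (x y : X) : Prop :=
  ∀ α f β v, IsRK E α f → E β α → FunApp E f β v → E y v → E x v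

/-- External `n`-th von Neumann natural number. -/
def IsVN (E : X → X → Prop) : ℕ → X → Prop
  | 0, x => ∀ z, ¬ E z x
  | (n + 1), x => ∃ y, IsVN E n y ∧ SuccOf E y x

/-- `a` is the `n`-th infinite cardinal `ℵ_n` (for external `n`, as computed in
the model): `ℵ₀ = ω`, and `ℵ_{n+1}` is the least cardinal above `ℵ_n`. -/
def IsAleph (E : X → X → Prop) : ℕ → X → Prop
  | 0, a => IsOmega E a
  | (n + 1), a => ∃ b, IsAleph E n b ∧ IsCardinal E a ∧ E b a ∧
      ∀ c, IsCardinal E c → E b c → (c = a ∨ E a c)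

/-- `a` is the cardinal `ℵ_ω` of the model: the least limit cardinal above `ω`. -/
def IsAlephOmega (E : X → X → Prop) (a : X) : Prop :=
  (IsCardinal E a ∧ (∃ w, IsOmega E w ∧ E w a) ∧
    (∀ β, E β a → ∃ μ, IsCardinal E μ ∧ E β μ ∧ E μ a)) ∧
  ∀ a', (IsCardinal E a' ∧ (∃ w, IsOmega E w ∧ E w a') ∧
    (∀ β, E β a' → ∃ μ, IsCardinal E μ ∧ E β μ ∧ E μ a')) → (a = a' ∨ E a a')

/-! ## Internal satisfaction and the constructible hierarchy (for `V = L`) -/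

/-- `c = ⟨n, a⟩` with the tag `n` an external natural (internally coded). -/
def TaggedBy (E : X → X → Prop) (c : X) (n : ℕ) (a : X) : Prop :=
  ∃ t, IsVN E n t ∧ IsPair E c t a

def CodeMem (E : X → X → Prop) (c i j : X) : Prop := ∃ p, IsPair E p i j ∧ TaggedBy E c 0 p
def CodeEq (E : X → X → Prop) (c i j : X) : Prop := ∃ p, IsPair E p i j ∧ TaggedBy E c 1 p
def CodeNot (E : X → X → Prop) (c' c : X) : Prop := TaggedBy E c' 2 c
def CodeAnd (E : X → X → Prop) (c' c₁ c₂ : X) : Prop := ∃ p, IsPair E p c₁ c₂ ∧ TaggedBy E c' 3 p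
def CodeEx (E : X → X → Prop) (c' i c : X) : Prop := ∃ p, IsPair E p i c ∧ TaggedBy E c' 4 p

/-- `d` is closed under the internal formation rules for codes of formulas with
variables indexed by elements of `w` (the internal `ω`). -/
def ClosedCode (E : X → X → Prop) (w d : X) : Prop :=
  (∀ i j c, E i w → E j w → CodeMem E c i j → E c d) ∧
  (∀ i j c, E i w → E j w → CodeEq E c i j → E c d) ∧
  (∀ c c', E c d → CodeNot E c' c → E c' d) ∧
  (∀ c₁ c₂ c', E c₁ d → E c₂ d → CodeAnd E c' c₁ c₂ → E c' d) ∧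
  (∀ i c c', E i w → E c d → CodeEx E c' i c → E c' d)

/-- `c` is an internal code of a first-order formula of the language of set theory. -/
def FormCode (E : X → X → Prop) (w c : X) : Prop := ∀ d, ClosedCode E w d → E c d

/-- An internal assignment of elements of `a` to the variables. -/
def IsAssign (E : X → X → Prop) (w a v : X) : Prop :=
  IsFuncOn E v w ∧ ∀ i y, FunApp E v i y → E y a

/-- `v' = v[i ↦ x]`. -/
def UpdateAssign (E : X → X → Prop) (w v : X) (i x v' : X) : Prop :=
  FunApp E v' i x ∧ ∀ j, E j w → j ≠ i → ∀ y, (FunApp E v j y ↔ FunApp E v' j y)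

def PairIn (E : X → X → Prop) (s c v : X) : Prop := ∃ q, E q s ∧ IsPair E q c v

/-- `s` is a (full) satisfaction class for the set structure `⟨a, E⟩`: a set of
pairs ⟨code, assignment⟩ obeying the Tarski conditions. -/
def SatSet (E : X → X → Prop) (w a s : X) : Prop :=
  (∀ q, E q s → ∃ c v, IsPair E q c v ∧ FormCode E w c ∧ IsAssign E w a v) ∧
  (∀ i j c v xi xj, E i w → E j w → CodeMem E c i j → IsAssign E w a v →
    FunApp E v i xi → FunApp E v j xj → (PairIn E s c v ↔ E xi xj)) ∧
  (∀ i j c v xi xj, E i w → E j w → CodeEq E c i j → IsAssign E w a v →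
    FunApp E v i xi → FunApp E v j xj → (PairIn E s c v ↔ xi = xj)) ∧
  (∀ c c' v, FormCode E w c → CodeNot E c' c → IsAssign E w a v →
    (PairIn E s c' v ↔ ¬ PairIn E s c v)) ∧
  (∀ c₁ c₂ c' v, FormCode E w c₁ → FormCode E w c₂ → CodeAnd E c' c₁ c₂ →
    IsAssign E w a v → (PairIn E s c' v ↔ (PairIn E s c₁ v ∧ PairIn E s c₂ v))) ∧
  (∀ i c c' v, E i w → FormCode E w c → CodeEx E c' i c → IsAssign E w a v →
    (PairIn E s c' v ↔ ∃ x v', E x a ∧ IsAssign E w a v' ∧ UpdateAssign E w v i x v' ∧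
      PairIn E s c v'))

/-- `b` is a subset of `a` definable over `⟨a, E⟩` (with parameters from `a`). -/
def DefSub (E : X → X → Prop) (w a s b : X) : Prop :=
  SubE E b a ∧ ∃ c, FormCode E w c ∧ ∃ v, IsAssign E w a v ∧ ∃ i, E i w ∧
    ∀ x, E x b ↔ (E x a ∧ ∃ v', IsAssign E w a v' ∧ UpdateAssign E w v i x v' ∧
      PairIn E s c v')

/-- `f` codes the constructible hierarchy `β ↦ L_β` for `β ∈ α`, using
`L_β = ⋃_{γ∈β} Def(L_γ)`. -/
def IsLHier (E : X → X → Prop) (w f α : X) : Prop :=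
  IsOrdinal E α ∧ IsFuncOn E f α ∧
  ∀ β vβ, E β α → FunApp E f β vβ →
    ∀ x, E x vβ ↔ ∃ γ, E γ β ∧ ∃ vγ, FunApp E f γ vγ ∧ ∃ s, SatSet E w vγ s ∧
      DefSub E w vγ s x

/-- The axiom `V = L`: every set belongs to some level of the constructible hierarchy. -/
def VeqL (E : X → X → Prop) : Prop :=
  ∀ w, IsOmega E w → ∀ x, ∃ α f β vβ, IsLHier E w f α ∧ E β α ∧ FunApp E f β vβ ∧ E x vβ

/-! ## Extensions -/

/-- The substructure of `⟨X, E⟩` with underlying set `A`. -/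
def restrict (E : X → X → Prop) (A : Set X) : A → A → Prop := fun a b => E a.1 b.1

/-- `B` is an end extension of `A` (both substructures of an ambient `⟨X, E⟩`). -/
def EndExtIn (E : X → X → Prop) (A B : Set X) : Prop :=
  A ⊆ B ∧ ∀ x y, x ∈ B → y ∈ A → E x y → x ∈ A

/-- `B` is a powerset-preserving end extension of `A` (within an ambient `⟨X, E⟩`);
`x ⊆ y` is computed in `B`. -/
def PowExtIn (E : X → X → Prop) (A B : Set X) : Prop :=
  EndExtIn E A B ∧ ∀ x y, x ∈ B → y ∈ A → (∀ z, z ∈ B → E z x → E z y) → x ∈ A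

/-- The whole structure `⟨X, E⟩` is an end extension of its substructure on `A`. -/
def EndExtSet (E : X → X → Prop) (A : Set X) : Prop :=
  ∀ x y, y ∈ A → E x y → x ∈ A

/-- `⟨X, E⟩` is a powerset-preserving end extension of its substructure on `A`. -/
def PowExtSet (E : X → X → Prop) (A : Set X) : Prop :=
  EndExtSet E A ∧ ∀ x y, y ∈ A → SubE E x y → x ∈ A

/-- `⟨X, E⟩` is a rank extension of its substructure on `A`. -/
def RankExtSet (E : X → X → Prop) (A : Set X) : Prop :=
  PowExtSet E A ∧ ∀ x y, y ∈ A → RankLe E x y → x ∈ A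

/-- The extension `⟨X, E⟩` of its substructure on `A` is proper and topless. -/
def ToplessSet (E : X → X → Prop) (A : Set X) : Prop :=
  A ≠ Set.univ ∧ ∀ c, (∀ x, E x c → x ∈ A) → c ∈ A

/-- The extension `⟨X, E⟩` of its substructure on `A` is proper and blunt (not topless). -/
def BluntSet (E : X → X → Prop) (A : Set X) : Prop :=
  A ≠ Set.univ ∧ ¬ ToplessSet E A

/-! ## Weak dependent choice -/

/-- `δ_ω^φ(b, f, p)`: `f` is a function on `ω` with `f(0) = {b}` tracing the
`φ`-successor relation. -/
def IsWDCWitness (E : X → X → Prop) {n : ℕ} (φ : SF (n + 2)) (p : Fin n → X)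
    (w b f : X) : Prop :=
  IsFuncOn E f w ∧
  (∃ z v, (∀ u, ¬ E u z) ∧ E z w ∧ FunApp E f z v ∧ ∀ t, E t v ↔ t = b) ∧
  ∀ m m' vm vm', E m w → SuccOf E m m' → E m' w → FunApp E f m vm → FunApp E f m' vm' →
    ((∀ x, E x vm → ∃ y, E y vm' ∧ φ.Eval E (Fin.snoc (Fin.snoc p x) y)) ∧
     (∀ y, E y vm' → ∀ x, E x vm → φ.Eval E (Fin.snoc (Fin.snoc p x) y)))

/-- The scheme `Δ₀^𝒫-WDC_ω`. -/
def WDComega (E : X → X → Prop) : Prop :=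
  ∀ (n : ℕ) (φ : SF (n + 2)), Delta0PC _ φ → ∀ p : Fin n → X,
    (∀ x, ∃ y, φ.Eval E (Fin.snoc (Fin.snoc p x) y)) →
    ∀ w, IsOmega E w → ∀ b, ∃ f, IsWDCWitness E φ p w b f

/-! ## Internal well-founded extensional relations (for `H_{≤κ}`) -/

def RRel (E : X → X → Prop) (R a b : X) : Prop := ∃ p, E p R ∧ IsPair E p a b

def RelOn (E : X → X → Prop) (R k : X) : Prop :=
  ∀ p, E p R → ∃ a b, IsPair E p a b ∧ E a k ∧ E b k

/-- `BFEXT(R, k)`: `R ⊆ k × k` is extensional on `k`, has a top element, and every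
nonempty subset of `k` has an `R`-minimal element. -/
def BFEXT (E : X → X → Prop) (R k : X) : Prop :=
  RelOn E R k ∧
  (∀ a b, E a k → E b k → (∀ c, E c k → (RRel E R c a ↔ RRel E R c b)) → a = b) ∧
  (∃ t, E t k ∧ ∀ b, E b k → b ≠ t → RRel E R b t) ∧
  (∀ S, SubE E S k → (∃ z, E z S) → ∃ m, E m S ∧ ∀ y, E y S → ¬ RRel E R y m)

/-- `f` is an isomorphism of `⟨k, R⟩` with `⟨T, ∈⟩`. -/
def IsoOnto (E : X → X → Prop) (R k f T : X) : Prop :=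
  IsFuncOn E f k ∧ (∀ x y, FunApp E f x y → E y T) ∧
  (∀ y, E y T → ∃ x, E x k ∧ FunApp E f x y) ∧
  (∀ x x' y, FunApp E f x y → FunApp E f x' y → x = x') ∧
  ∀ a b ya yb, E a k → E b k → FunApp E f a ya → FunApp E f b yb →
    (RRel E R a b ↔ E ya yb)

/-- The predicate `Xv = H_{≤κ} = {x : |TC(x)| ≤ κ}`. -/
def HleqPred (E : X → X → Prop) (Xv κ : X) : Prop :=
  IsCardinal E κ ∧ ∀ x, E x Xv ↔ ∃ t, IsTCset E t x ∧ CardLe E t κ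

/-- The explicit conjunction (i) ∧ (ii) ∧ (iii) asserting `Xv = H_{≤κ}`. -/
def ExplicitH (E : X → X → Prop) (Xv κ : X) : Prop :=
  IsCardinal E κ ∧
  (∀ R, BFEXT E R κ → ∃ x f T, E x Xv ∧ E f Xv ∧ E T Xv ∧ IsTCsingleton E T x ∧
    IsoOnto E R κ f T) ∧
  (∀ x, E x Xv → ∃ T f, E T Xv ∧ E f Xv ∧ IsTCsingleton E T x ∧ InjFunInto E f T κ)


/-! ## Auxiliary infrastructure for the proof -/

namespace SF

/-- Lift a renaming under one binder. -/
def liftR {n m : ℕ} (ρ : Fin n → Fin m) : Fin (n + 1) → Fin (m + 1) :=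
  Fin.snoc (fun i => (ρ i).castSucc) (Fin.last m)

/-- Rename the free variables of a formula. -/
def rename : {n m : ℕ} → (Fin n → Fin m) → SF n → SF m
  | _, _, ρ, .mem i j => .mem (ρ i) (ρ j)
  | _, _, ρ, .eq i j => .eq (ρ i) (ρ j)
  | _, _, ρ, .not φ => .not (φ.rename ρ)
  | _, _, ρ, .and φ ψ => .and (φ.rename ρ) (ψ.rename ρ)
  | _, _, ρ, .or φ ψ => .or (φ.rename ρ) (ψ.rename ρ)
  | _, _, ρ, .bexMem i φ => .bexMem (ρ i) (φ.rename (liftR ρ))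
  | _, _, ρ, .ballMem i φ => .ballMem (ρ i) (φ.rename (liftR ρ))
  | _, _, ρ, .bexSub i φ => .bexSub (ρ i) (φ.rename (liftR ρ))
  | _, _, ρ, .ballSub i φ => .ballSub (ρ i) (φ.rename (liftR ρ))
  | _, _, ρ, .ex φ => .ex (φ.rename (liftR ρ))
  | _, _, ρ, .all φ => .all (φ.rename (liftR ρ))

theorem snoc_comp_liftR {X : Type u} {n m : ℕ} (ρ : Fin n → Fin m) (v : Fin m → X) (x : X) :
    (Fin.snoc v x : Fin (m+1) → X) ∘ liftR ρ = Fin.snoc (v ∘ ρ) x := by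
  funext i
  refine Fin.lastCases ?_ (fun j => ?_) i
  · simp [liftR, Function.comp]
  · simp [liftR, Function.comp]

theorem eval_rename {X : Type u} (E : X → X → Prop) :
    ∀ {n m : ℕ} (φ : SF n) (ρ : Fin n → Fin m) (v : Fin m → X),
    (φ.rename ρ).Eval E v ↔ φ.Eval E (v ∘ ρ)
  | _, _, .mem i j, ρ, v => Iff.rfl
  | _, _, .eq i j, ρ, v => Iff.rfl
  | _, _, .not φ, ρ, v => by simp [rename, Eval, eval_rename E φ ρ v]
  | _, _, .and φ ψ, ρ, v => by simp [rename, Eval, eval_rename E φ ρ v, eval_rename E ψ ρ v]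
  | _, _, .or φ ψ, ρ, v => by simp [rename, Eval, eval_rename E φ ρ v, eval_rename E ψ ρ v]
  | _, _, .bexMem i φ, ρ, v => by
      simp only [rename, Eval]
      refine exists_congr fun x => and_congr_right fun _ => ?_
      rw [eval_rename E φ (liftR ρ) (Fin.snoc v x), snoc_comp_liftR]
  | _, _, .ballMem i φ, ρ, v => by
      simp only [rename, Eval]
      refine forall_congr' fun x => imp_congr_right fun _ => ?_
      rw [eval_rename E φ (liftR ρ) (Fin.snoc v x), snoc_comp_liftR]
  | _, _, .bexSub i φ, ρ, v => by
      simp only [rename, Eval]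
      refine exists_congr fun x => and_congr_right fun _ => ?_
      rw [eval_rename E φ (liftR ρ) (Fin.snoc v x), snoc_comp_liftR]
  | _, _, .ballSub i φ, ρ, v => by
      simp only [rename, Eval]
      refine forall_congr' fun x => imp_congr_right fun _ => ?_
      rw [eval_rename E φ (liftR ρ) (Fin.snoc v x), snoc_comp_liftR]
  | _, _, .ex φ, ρ, v => by
      simp only [rename, Eval]
      refine exists_congr fun x => ?_
      rw [eval_rename E φ (liftR ρ) (Fin.snoc v x), snoc_comp_liftR]
  | _, _, .all φ, ρ, v => by
      simp only [rename, Eval]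
      refine forall_congr' fun x => ?_
      rw [eval_rename E φ (liftR ρ) (Fin.snoc v x), snoc_comp_liftR]

theorem isDelta0P_rename : ∀ {n m : ℕ} (φ : SF n) (ρ : Fin n → Fin m),
    φ.IsDelta0P → (φ.rename ρ).IsDelta0P
  | _, _, .mem i j, ρ, h => trivial
  | _, _, .eq i j, ρ, h => trivial
  | _, _, .not φ, ρ, h => isDelta0P_rename φ _ h
  | _, _, .and φ ψ, ρ, h => ⟨isDelta0P_rename φ _ h.1, isDelta0P_rename ψ _ h.2⟩
  | _, _, .or φ ψ, ρ, h => ⟨isDelta0P_rename φ _ h.1, isDelta0P_rename ψ _ h.2⟩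
  | _, _, .bexMem i φ, ρ, h => isDelta0P_rename φ _ h
  | _, _, .ballMem i φ, ρ, h => isDelta0P_rename φ _ h
  | _, _, .bexSub i φ, ρ, h => isDelta0P_rename φ _ h
  | _, _, .ballSub i φ, ρ, h => isDelta0P_rename φ _ h

theorem isDelta0_rename : ∀ {n m : ℕ} (φ : SF n) (ρ : Fin n → Fin m),
    φ.IsDelta0 → (φ.rename ρ).IsDelta0
  | _, _, .mem i j, ρ, h => trivial
  | _, _, .eq i j, ρ, h => trivial
  | _, _, .not φ, ρ, h => isDelta0_rename φ _ h
  | _, _, .and φ ψ, ρ, h => ⟨isDelta0_rename φ _ h.1, isDelta0_rename ψ _ h.2⟩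
  | _, _, .or φ ψ, ρ, h => ⟨isDelta0_rename φ _ h.1, isDelta0_rename ψ _ h.2⟩
  | _, _, .bexMem i φ, ρ, h => isDelta0_rename φ _ h
  | _, _, .ballMem i φ, ρ, h => isDelta0_rename φ _ h

theorem isDelta0P_of_isDelta0 : ∀ {n : ℕ} (φ : SF n), φ.IsDelta0 → φ.IsDelta0P
  | _, .mem i j, h => trivial
  | _, .eq i j, h => trivial
  | _, .not φ, h => isDelta0P_of_isDelta0 φ h
  | _, .and φ ψ, h => ⟨isDelta0P_of_isDelta0 φ h.1, isDelta0P_of_isDelta0 ψ h.2⟩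
  | _, .or φ ψ, h => ⟨isDelta0P_of_isDelta0 φ h.1, isDelta0P_of_isDelta0 ψ h.2⟩
  | _, .bexMem i φ, h => isDelta0P_of_isDelta0 φ h
  | _, .ballMem i φ, h => isDelta0P_of_isDelta0 φ h

end SF

set_option linter.unusedVariables false

section Pairs

variable {X : Type u} {E : X → X → Prop}

/-- semantic: value-pair ⟨i,⟨y,v⟩⟩ belongs to f -/
def Val (E : X → X → Prop) (f i y v : X) : Prop :=
  ∃ q u, E q f ∧ IsPair E q i u ∧ IsPair E u y v

theorem pair_exists (hpair : PairAx E) (hext : ExtensionalityAx E) (x y : X) :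
    ∃ q, IsPair E q x y := by
  obtain ⟨s1, hs1⟩ := hpair x x
  obtain ⟨s2, hs2⟩ := hpair x y
  obtain ⟨q, hq⟩ := hpair s1 s2
  refine ⟨q, fun z => ?_⟩
  rw [hq]
  constructor
  · rintro (rfl | rfl)
    · left; intro w; rw [hs1]; tauto
    · right; intro w; rw [hs2]
  · rintro (h | h)
    · left; exact hext _ _ fun t => by rw [hs1, h]; tauto
    · right; exact hext _ _ fun t => by rw [hs2, h]

theorem isPair_inj (hext : ExtensionalityAx E) (hpair : PairAx E) {q x y x' y' : X}
    (h1 : IsPair E q x y) (h2 : IsPair E q x' y') : x = x' ∧ y = y' := by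
  -- the singleton {x} and the doubleton {x,y} exist
  obtain ⟨s1, hs1⟩ := hpair x x
  obtain ⟨s2, hs2⟩ := hpair x y
  have hs1q : E s1 q := (h1 s1).2 (Or.inl fun w => by rw [hs1]; tauto)
  have hs2q : E s2 q := (h1 s2).2 (Or.inr fun w => by rw [hs2])
  have hxx' : x = x' := by
    rcases (h2 s1).1 hs1q with h | h
    · have := (h x).1 (by rw [hs1]; tauto); exact this
    · have := (h x).1 (by rw [hs1]; tauto)
      rcases this with rfl | rfl
      · rfl
      · -- x = y'; show x' = x too: x' ∈ s1
        have := (h x').2 (Or.inl rfl)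
        rw [hs1] at this; tauto
  subst hxx'
  constructor
  · rfl
  -- now show y = y'
  obtain ⟨s2', hs2'⟩ := hpair x y'
  have hs2'q : E s2' q := (h2 s2').2 (Or.inr fun w => by rw [hs2'])
  -- s2' ∈ q, so by h1 it is {x} or {x,y}
  have hy' : y' = x ∨ y' = y := by
    rcases (h1 s2').1 hs2'q with h | h
    · have := (h y').1 (by rw [hs2']; tauto); tauto
    · have := (h y').1 (by rw [hs2']; tauto); tauto
  have hy : y = x ∨ y = y' := by
    rcases (h2 s2).1 hs2q with h | h
    · have := (h y).1 (by rw [hs2]; tauto); tauto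
    · have := (h y).1 (by rw [hs2]; tauto); tauto
  rcases hy with hy | hy
  · rcases hy' with hy' | hy'
    · rw [hy, hy']
    · exact hy'.symm
  · exact hy

section Combinators

variable {X : Type u} {E : X → X → Prop}

/-- Δ₀ formula: "var c is the singleton of var x" -/
def sfSingle {k : ℕ} (c x : Fin k) : SF k :=
  .and (.mem x c) (.ballMem c (.eq (Fin.last k) x.castSucc))

/-- Δ₀ formula: "var c is the (unordered) pair of vars x, y" -/
def sfDoub {k : ℕ} (c x y : Fin k) : SF k :=
  .and (.mem x c) (.and (.mem y c)
    (.ballMem c (.or (.eq (Fin.last k) x.castSucc) (.eq (Fin.last k) y.castSucc))))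

/-- Δ₀ formula expressing `IsPair` (ordered Kuratowski pair). -/
def sfPair {k : ℕ} (q x y : Fin k) : SF k :=
  .and (.ballMem q (.or (sfSingle (Fin.last k) x.castSucc)
        (sfDoub (Fin.last k) x.castSucc y.castSucc)))
   (.and (.bexMem q (sfSingle (Fin.last k) x.castSucc))
         (.bexMem q (sfDoub (Fin.last k) x.castSucc y.castSucc)))

theorem sfSingle_isDelta0 {k : ℕ} (c x : Fin k) : (sfSingle c x).IsDelta0 := ⟨trivial, trivial⟩
theorem sfDoub_isDelta0 {k : ℕ} (c x y : Fin k) : (sfDoub c x y).IsDelta0 :=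
  ⟨trivial, trivial, ⟨trivial, trivial⟩⟩
theorem sfPair_isDelta0 {k : ℕ} (q x y : Fin k) : (sfPair q x y).IsDelta0 :=
  ⟨⟨sfSingle_isDelta0 _ _, sfDoub_isDelta0 _ _ _⟩,
    sfSingle_isDelta0 _ _, sfDoub_isDelta0 _ _ _⟩

/-- The fully unfolded satisfaction of `sfPair`. -/
def PairProps (E : X → X → Prop) (a b c : X) : Prop :=
  (∀ z, E z a → ((E b z ∧ ∀ t, E t z → t = b) ∨
      (E b z ∧ E c z ∧ ∀ t, E t z → (t = b ∨ t = c)))) ∧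
  (∃ z, E z a ∧ E b z ∧ ∀ t, E t z → t = b) ∧
  (∃ z, E z a ∧ E b z ∧ E c z ∧ ∀ t, E t z → (t = b ∨ t = c))

theorem pairProps_iff (hext : ExtensionalityAx E) (hpair : PairAx E) (a b c : X) :
    PairProps E a b c ↔ IsPair E a b c := by
  have hS : ∀ z : X, ((E b z ∧ ∀ t, E t z → t = b) ↔ (∀ t, E t z ↔ t = b)) := by
    intro z; constructor
    · rintro ⟨h1, h2⟩ t; exact ⟨h2 t, by rintro rfl; exact h1⟩
    · intro h; exact ⟨(h _).2 rfl, fun t ht => (h t).1 ht⟩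
  have hD : ∀ z : X, ((E b z ∧ E c z ∧ ∀ t, E t z → (t = b ∨ t = c)) ↔
      (∀ t, E t z ↔ (t = b ∨ t = c))) := by
    intro z; constructor
    · rintro ⟨h1, h1', h2⟩ t
      exact ⟨h2 t, by rintro (rfl | rfl); exacts [h1, h1']⟩
    · intro h; exact ⟨(h _).2 (Or.inl rfl), (h _).2 (Or.inr rfl), fun t ht => (h t).1 ht⟩
  constructor
  · rintro ⟨h1, ⟨z1, hz1, hs⟩, ⟨z2, hz2, hd⟩⟩ z
    constructor
    · intro hz
      rcases h1 z hz with h | h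
      · exact Or.inl ((hS z).1 h)
      · exact Or.inr ((hD z).1 h)
    · rintro (hz | hz)
      · have h1' := (hS z1).1 hs
        have : z = z1 := hext _ _ fun t => by rw [hz t, h1' t]
        rw [this]; exact hz1
      · have h2' := (hD z2).1 hd
        have : z = z2 := hext _ _ fun t => by rw [hz t, h2' t]
        rw [this]; exact hz2
  · intro hp
    obtain ⟨s1, hs1⟩ := hpair b b
    obtain ⟨s2, hs2⟩ := hpair b c
    have hs1' : ∀ t, E t s1 ↔ t = b := fun t => by rw [hs1]; tauto
    have hs2' : ∀ t, E t s2 ↔ (t = b ∨ t = c) := fun t => by rw [hs2]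
    refine ⟨?_, ⟨s1, (hp s1).2 (Or.inl hs1'), (hS s1).2 hs1'⟩,
      ⟨s2, (hp s2).2 (Or.inr hs2'), (hD s2).2 hs2'⟩⟩
    intro z hz
    rcases (hp z).1 hz with h | h
    · exact Or.inl ((hS z).2 h)
    · exact Or.inr ((hD z).2 h)

end Combinators

section PairQuant

variable {X : Type u} {E : X → X → Prop}

/-- renaming used to put a body expecting `(params, x, y)` into the 4-binder decode context -/
def pqRho (k : ℕ) : Fin (k + 2) → Fin (k + 4) :=
  Fin.snoc (Fin.snoc (fun j : Fin k => j.castSucc.castSucc.castSucc.castSucc)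
    ((Fin.last (k+1)).castSucc.castSucc)) (Fin.last (k+3))

/-- `∃ x y, IsPair (v s) x y ∧ body[x,y]`, as a bounded formula. -/
def exPairOf {k : ℕ} (s : Fin k) (body : SF (k + 2)) : SF k :=
  .bexMem s (.bexMem (Fin.last k) (.bexMem s.castSucc.castSucc (.bexMem (Fin.last (k+2))
    (.and (sfPair s.castSucc.castSucc.castSucc.castSucc
      ((Fin.last (k+1)).castSucc.castSucc) (Fin.last (k+3)))
      (body.rename (pqRho k))))))

/-- `∀ x y, IsPair (v s) x y → body[x,y]`, as a bounded formula. -/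
def allPairOf {k : ℕ} (s : Fin k) (body : SF (k + 2)) : SF k :=
  .ballMem s (.ballMem (Fin.last k) (.ballMem s.castSucc.castSucc (.ballMem (Fin.last (k+2))
    (.or (.not (sfPair s.castSucc.castSucc.castSucc.castSucc
      ((Fin.last (k+1)).castSucc.castSucc) (Fin.last (k+3))))
      (body.rename (pqRho k))))))

theorem exPairOf_isDelta0P {k : ℕ} (s : Fin k) (body : SF (k + 2))
    (hb : body.IsDelta0P) : (exPairOf s body).IsDelta0P :=
  ⟨SF.isDelta0P_of_isDelta0 _ (sfPair_isDelta0 _ _ _), SF.isDelta0P_rename _ _ hb⟩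

theorem allPairOf_isDelta0P {k : ℕ} (s : Fin k) (body : SF (k + 2))
    (hb : body.IsDelta0P) : (allPairOf s body).IsDelta0P :=
  ⟨SF.isDelta0P_of_isDelta0 _ (sfPair_isDelta0 _ _ _), SF.isDelta0P_rename _ _ hb⟩

theorem exPairOf_isDelta0 {k : ℕ} (s : Fin k) (body : SF (k + 2))
    (hb : body.IsDelta0) : (exPairOf s body).IsDelta0 :=
  ⟨sfPair_isDelta0 _ _ _, SF.isDelta0_rename _ _ hb⟩

theorem allPairOf_isDelta0 {k : ℕ} (s : Fin k) (body : SF (k + 2))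
    (hb : body.IsDelta0) : (allPairOf s body).IsDelta0 :=
  ⟨sfPair_isDelta0 _ _ _, SF.isDelta0_rename _ _ hb⟩

theorem comp_pqRho {k : ℕ} (v : Fin k → X) (c x c' y : X) :
    (Fin.snoc (Fin.snoc (Fin.snoc (Fin.snoc v c) x) c') y : Fin (k+4) → X) ∘ pqRho k =
      Fin.snoc (Fin.snoc v x) y := by
  funext i
  refine Fin.lastCases ?_ (fun j => ?_) i
  · simp [pqRho, Function.comp]
  · refine Fin.lastCases ?_ (fun j' => ?_) j
    · simp [pqRho, Function.comp]
    · simp [pqRho, Function.comp]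

theorem eval_exPairOf (hext : ExtensionalityAx E) (hpair : PairAx E)
    {k : ℕ} (s : Fin k) (body : SF (k + 2)) (v : Fin k → X) :
    (exPairOf s body).Eval E v ↔
      ∃ x y, IsPair E (v s) x y ∧ body.Eval E (Fin.snoc (Fin.snoc v x) y) := by
  simp only [exPairOf, sfPair, sfSingle, sfDoub, SF.Eval, Fin.snoc_castSucc, Fin.snoc_last,
    SF.eval_rename, comp_pqRho]
  constructor
  · rintro ⟨c, hc, x, hx, c', hc', y, hy, hp, hb⟩
    exact ⟨x, y, (pairProps_iff hext hpair (v s) x y).1 hp, hb⟩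
  · rintro ⟨x, y, hpr, hb⟩
    obtain ⟨h1, ⟨z1, hz1a, hz1b⟩, ⟨z2, hz2a, hz2b⟩⟩ :=
      (pairProps_iff hext hpair (v s) x y).2 hpr
    exact ⟨z1, hz1a, x, hz1b.1, z2, hz2a, y, hz2b.2.1,
      ⟨h1, ⟨z1, hz1a, hz1b⟩, ⟨z2, hz2a, hz2b⟩⟩, hb⟩

theorem eval_allPairOf (hext : ExtensionalityAx E) (hpair : PairAx E)
    {k : ℕ} (s : Fin k) (body : SF (k + 2)) (v : Fin k → X) :
    (allPairOf s body).Eval E v ↔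
      ∀ x y, IsPair E (v s) x y → body.Eval E (Fin.snoc (Fin.snoc v x) y) := by
  simp only [allPairOf, sfPair, sfSingle, sfDoub, SF.Eval, Fin.snoc_castSucc, Fin.snoc_last,
    SF.eval_rename, comp_pqRho]
  constructor
  · intro h x y hpr
    obtain ⟨h1, ⟨z1, hz1a, hz1b⟩, ⟨z2, hz2a, hz2b⟩⟩ :=
      (pairProps_iff hext hpair (v s) x y).2 hpr
    rcases h z1 hz1a x hz1b.1 z2 hz2a y hz2b.2.1 with hng | hb
    · exact absurd ⟨h1, ⟨z1, hz1a, hz1b⟩, ⟨z2, hz2a, hz2b⟩⟩ hng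
    · exact hb
  · intro h c hc x hx c' hc' y hy
    by_cases hp : PairProps E (v s) x y
    · exact Or.inr (h x y ((pairProps_iff hext hpair (v s) x y).1 hp))
    · exact Or.inl fun hcon => hp hcon

end PairQuant

section ValQuant

variable {X : Type u} {E : X → X → Prop}

/-- renaming for bodies expecting `(params, i, y, v)` into the `(q,i,u,y,v)` context -/
def vRho (k : ℕ) : Fin (k + 3) → Fin (k + 5) :=
  Fin.snoc (Fin.snoc (Fin.snoc
    (fun j : Fin k => j.castSucc.castSucc.castSucc.castSucc.castSucc)
    ((Fin.last (k+1)).castSucc.castSucc.castSucc))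
    ((Fin.last (k+3)).castSucc))
    (Fin.last (k+4))

/-- `∃ i y v, ⟨i,⟨y,v⟩⟩ ∈ (v f) ∧ body[i,y,v]` -/
def exValOf {k : ℕ} (f : Fin k) (body : SF (k + 3)) : SF k :=
  .bexMem f (exPairOf (Fin.last k) (exPairOf (Fin.last (k+2)) (body.rename (vRho k))))

/-- `∀ i y v, ⟨i,⟨y,v⟩⟩ ∈ (v f) → body[i,y,v]` -/
def allValOf {k : ℕ} (f : Fin k) (body : SF (k + 3)) : SF k :=
  .ballMem f (allPairOf (Fin.last k) (allPairOf (Fin.last (k+2)) (body.rename (vRho k))))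

theorem exValOf_isDelta0P {k : ℕ} (f : Fin k) (body : SF (k + 3))
    (hb : body.IsDelta0P) : (exValOf f body).IsDelta0P :=
  exPairOf_isDelta0P _ _ (exPairOf_isDelta0P _ _ (SF.isDelta0P_rename _ _ hb))

theorem allValOf_isDelta0P {k : ℕ} (f : Fin k) (body : SF (k + 3))
    (hb : body.IsDelta0P) : (allValOf f body).IsDelta0P :=
  allPairOf_isDelta0P _ _ (allPairOf_isDelta0P _ _ (SF.isDelta0P_rename _ _ hb))

theorem exValOf_isDelta0 {k : ℕ} (f : Fin k) (body : SF (k + 3))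
    (hb : body.IsDelta0) : (exValOf f body).IsDelta0 :=
  exPairOf_isDelta0 _ _ (exPairOf_isDelta0 _ _ (SF.isDelta0_rename _ _ hb))

theorem allValOf_isDelta0 {k : ℕ} (f : Fin k) (body : SF (k + 3))
    (hb : body.IsDelta0) : (allValOf f body).IsDelta0 :=
  allPairOf_isDelta0 _ _ (allPairOf_isDelta0 _ _ (SF.isDelta0_rename _ _ hb))

theorem comp_vRho {k : ℕ} (v : Fin k → X) (q i u y' v' : X) :
    (Fin.snoc (Fin.snoc (Fin.snoc (Fin.snoc (Fin.snoc v q) i) u) y') v' : Fin (k+5) → X)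
      ∘ vRho k = Fin.snoc (Fin.snoc (Fin.snoc v i) y') v' := by
  funext t
  refine Fin.lastCases ?_ (fun j => ?_) t
  · simp [vRho, Function.comp]
  · refine Fin.lastCases ?_ (fun j' => ?_) j
    · simp [vRho, Function.comp]
    · refine Fin.lastCases ?_ (fun j'' => ?_) j'
      · simp [vRho, Function.comp]
      · simp [vRho, Function.comp]

theorem eval_exValOf (hext : ExtensionalityAx E) (hpair : PairAx E)
    {k : ℕ} (f : Fin k) (body : SF (k + 3)) (v : Fin k → X) :
    (exValOf f body).Eval E v ↔
      ∃ i y' v', Val E (v f) i y' v' ∧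
        body.Eval E (Fin.snoc (Fin.snoc (Fin.snoc v i) y') v') := by
  constructor
  · rintro ⟨q, hq, h1⟩
    rw [eval_exPairOf hext hpair] at h1
    obtain ⟨i, u, hp1, h2⟩ := h1
    rw [eval_exPairOf hext hpair] at h2
    obtain ⟨y', v', hp2, hb⟩ := h2
    rw [SF.eval_rename, comp_vRho] at hb
    rw [Fin.snoc_last] at hp1 hp2
    exact ⟨i, y', v', ⟨q, u, hq, hp1, hp2⟩, hb⟩
  · rintro ⟨i, y', v', ⟨q, u, hq, hp1, hp2⟩, hb⟩
    refine ⟨q, hq, ?_⟩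
    rw [eval_exPairOf hext hpair]
    refine ⟨i, u, by rw [Fin.snoc_last]; exact hp1, ?_⟩
    rw [eval_exPairOf hext hpair]
    exact ⟨y', v', by rw [Fin.snoc_last]; exact hp2,
      by rw [SF.eval_rename, comp_vRho]; exact hb⟩

theorem eval_allValOf (hext : ExtensionalityAx E) (hpair : PairAx E)
    {k : ℕ} (f : Fin k) (body : SF (k + 3)) (v : Fin k → X) :
    (allValOf f body).Eval E v ↔
      ∀ i y' v', Val E (v f) i y' v' →
        body.Eval E (Fin.snoc (Fin.snoc (Fin.snoc v i) y') v') := by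
  constructor
  · intro h i y' v' hval
    obtain ⟨q, u, hq, hp1, hp2⟩ := hval
    have h1 := h q hq
    rw [eval_allPairOf hext hpair] at h1
    have h2 := h1 i u (by rw [Fin.snoc_last]; exact hp1)
    rw [eval_allPairOf hext hpair] at h2
    have h3 := h2 y' v' (by rw [Fin.snoc_last]; exact hp2)
    rw [SF.eval_rename, comp_vRho] at h3
    exact h3
  · intro h q hq
    rw [eval_allPairOf hext hpair]
    intro i u hp1
    rw [eval_allPairOf hext hpair]
    intro y' v' hp2
    rw [SF.eval_rename, comp_vRho]
    rw [Fin.snoc_last] at hp1 hp2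
    exact h i y' v' ⟨q, u, hq, hp1, hp2⟩

end ValQuant

section OmegaFacts

variable {X : Type u} {E : X → X → Prop} {w : X}

/-- Δ₀ formula for `SuccOf`. -/
def sfSuccOf {k : ℕ} (p x : Fin k) : SF k :=
  .and (.mem p x) (.and
    (.ballMem x (.or (.mem (Fin.last k) p.castSucc) (.eq (Fin.last k) p.castSucc)))
    (.ballMem p (.mem (Fin.last k) x.castSucc)))

theorem sfSuccOf_isDelta0 {k : ℕ} (p x : Fin k) : (sfSuccOf p x).IsDelta0 :=
  ⟨trivial, ⟨trivial, trivial⟩, trivial⟩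

theorem eval_sfSuccOf {k : ℕ} (p x : Fin k) (v : Fin k → X) :
    (sfSuccOf p x).Eval E v ↔ SuccOf E (v p) (v x) := by
  simp only [sfSuccOf, SF.Eval, Fin.snoc_castSucc, Fin.snoc_last]
  constructor
  · rintro ⟨h1, h2, h3⟩ z
    exact ⟨fun hz => h2 z hz, by rintro (hz | rfl); exacts [h3 z hz, h1]⟩
  · intro hs
    exact ⟨(hs _).2 (Or.inr rfl), fun z hz => (hs z).1 hz, fun z hz => (hs z).2 (Or.inl hz)⟩

theorem succOf_mem {x s : X} (h : SuccOf E x s) : E x s := (h x).2 (Or.inr rfl)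

/-- Induction on the internal ω for Δ₀-definable properties. -/
theorem omega_ind (hM : ModelMminus E) (hw : IsOmega E w)
    {k : ℕ} (φ : SF (k + 1)) (hφ : φ.IsDelta0) (p : Fin k → X)
    (base : ∀ e, E e w → (∀ z, ¬ E z e) → φ.Eval E (Fin.snoc p e))
    (step : ∀ x s, E x w → E s w → SuccOf E x s →
      φ.Eval E (Fin.snoc p x) → φ.Eval E (Fin.snoc p s)) :
    ∀ x, E x w → φ.Eval E (Fin.snoc p x) := by
  have sep := hM.2.2.2.2.2.2.2.1
  obtain ⟨S, hS⟩ := sep k φ hφ p w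
  have hind : InductiveSet E S := by
    constructor
    · obtain ⟨e, hew, he⟩ := hw.1.1
      exact ⟨e, (hS e).2 ⟨hew, base e hew he⟩, he⟩
    · intro x hx
      have hxw := ((hS x).1 hx).1
      have hφx := ((hS x).1 hx).2
      obtain ⟨s, hsw, hsucc⟩ := hw.1.2 x hxw
      exact ⟨s, (hS s).2 ⟨hsw, step x s hxw hsw hsucc hφx⟩, hsucc⟩
  intro x hx
  exact ((hS x).1 (hw.2 S hind x hx)).2

/-- ω is transitive. -/
theorem mem_w_trans (hM : ModelMminus E) (hw : IsOmega E w) :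
    ∀ x, E x w → ∀ y, E y x → E y w := by
  have := omega_ind (E := E) hM hw
    (.ballMem (Fin.last 1) (.mem (Fin.last 2) ((Fin.last 0).castSucc.castSucc)))
    trivial (fun _ => w) ?_ ?_
  · intro x hx y hy
    have h := this x hx
    simp only [SF.Eval, Fin.snoc_castSucc, Fin.snoc_last] at h
    exact h y hy
  · intro e hew he
    simp only [SF.Eval, Fin.snoc_castSucc, Fin.snoc_last]
    intro z hz; exact absurd hz (he z)
  · intro x s hxw hsw hsucc hx
    simp only [SF.Eval, Fin.snoc_castSucc, Fin.snoc_last] at hx ⊢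
    intro z hz
    rcases (hsucc z).1 hz with h | rfl
    · exact hx z h
    · exact hxw

/-- every element of ω is a transitive set. -/
theorem mem_w_transSet (hM : ModelMminus E) (hw : IsOmega E w) :
    ∀ x, E x w → TransSet E x := by
  have := omega_ind (E := E) hM hw
    (.ballMem (Fin.last 0) (.ballMem (Fin.last 1) (.mem (Fin.last 2)
      ((Fin.last 0).castSucc.castSucc))))
    trivial (fun i => i.elim0) ?_ ?_
  · intro x hx
    have h := this x hx
    simp only [SF.Eval, Fin.snoc_castSucc, Fin.snoc_last] at h
    exact fun y hy z hz => h y hy z hz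
  · intro e hew he
    simp only [SF.Eval, Fin.snoc_castSucc, Fin.snoc_last]
    intro z hz; exact absurd hz (he z)
  · intro x s hxw hsw hsucc hx
    simp only [SF.Eval, Fin.snoc_castSucc, Fin.snoc_last] at hx ⊢
    intro y hy z hz
    rcases (hsucc y).1 hy with h | rfl
    · exact (hsucc z).2 (Or.inl (hx y h z hz))
    · exact (hsucc z).2 (Or.inl hz)

/-- no element of ω is a member of itself. -/
theorem mem_w_irrefl (hM : ModelMminus E) (hw : IsOmega E w) :
    ∀ x, E x w → ¬ E x x := by
  have := omega_ind (E := E) hM hw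
    (.not (.mem (Fin.last 0) (Fin.last 0))) trivial (fun i => i.elim0) ?_ ?_
  · intro x hx
    have h := this x hx
    simp only [SF.Eval, Fin.snoc_last] at h
    exact h
  · intro e hew he
    simp only [SF.Eval, Fin.snoc_last]
    exact he e
  · intro x s hxw hsw hsucc hx
    simp only [SF.Eval, Fin.snoc_last] at hx ⊢
    intro hss
    rcases (hsucc s).1 hss with h | rfl
    · exact hx ((mem_w_transSet hM hw x hxw) s h x (succOf_mem hsucc))
    · exact hx (succOf_mem hsucc)

/-- every nonempty element of ω has a predecessor in ω. -/
theorem mem_w_pred (hM : ModelMminus E) (hw : IsOmega E w) :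
    ∀ x, E x w → (∃ z, E z x) → ∃ p, E p w ∧ SuccOf E p x := by
  have := omega_ind (E := E) hM hw
    (.or (.ballMem (Fin.last 1) (.not (.eq (Fin.last 2) (Fin.last 2))))
      (.bexMem ((Fin.last 0).castSucc)
        (sfSuccOf (Fin.last 2) ((Fin.last 1).castSucc))))
    ⟨trivial, sfSuccOf_isDelta0 _ _⟩ (fun _ => w) ?_ ?_
  · intro x hx hex
    obtain ⟨z, hz⟩ := hex
    have h := this x hx
    simp only [SF.Eval, sfSuccOf, Fin.snoc_castSucc, Fin.snoc_last] at h
    rcases h with h | ⟨q, hqw, hq⟩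
    · exact absurd trivial (h z hz)
    · refine ⟨q, hqw, fun t => ⟨fun ht => hq.2.1 t ht, ?_⟩⟩
      rintro (ht | rfl)
      exacts [hq.2.2 t ht, hq.1]
  · intro e hew he
    simp only [SF.Eval, sfSuccOf, Fin.snoc_castSucc, Fin.snoc_last]
    exact Or.inl fun z hz => absurd hz (he z)
  · intro x s hxw hsw hsucc _
    simp only [SF.Eval, sfSuccOf, Fin.snoc_castSucc, Fin.snoc_last]
    exact Or.inr ⟨x, hxw, succOf_mem hsucc, fun z hz => (hsucc z).1 hz,
      fun z hz => (hsucc z).2 (Or.inl hz)⟩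

/-- predecessors are unique. -/
theorem pred_unique (hM : ModelMminus E) (hw : IsOmega E w)
    {p p' x : X} (hp : E p w) (hp' : E p' w)
    (h1 : SuccOf E p x) (h2 : SuccOf E p' x) : p = p' := by
  by_contra hne
  have hpx : E p x := succOf_mem h1
  have hp'x : E p' x := succOf_mem h2
  rcases (h2 p).1 hpx with h | h
  · rcases (h1 p').1 hp'x with h' | h'
    · exact mem_w_irrefl hM hw p hp (mem_w_transSet hM hw p hp p' h' p h)
    · exact hne h'.symm
  · exact hne h

/-- successors are unique. -/
theorem succ_unique (hext : ExtensionalityAx E) {x s s' : X}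
    (h1 : SuccOf E x s) (h2 : SuccOf E x s') : s = s' :=
  hext _ _ fun z => by rw [h1 z, h2 z]

end OmegaFacts

section LNP

variable {X : Type u} {E : X → X → Prop} {w : X}

/-- Least-element principle for Δ₀ᴾ classes, from Π₁ᴾ-foundation on ω. -/
theorem lnp
    (hPi : ∀ (n : ℕ) (φ : SF (n + 1)), Pi1PC _ φ → ∀ p : Fin n → X,
      (∃ x, E x w ∧ φ.Eval E (Fin.snoc p x)) →
      ∃ y, E y w ∧ φ.Eval E (Fin.snoc p y) ∧
        ∀ x, E x w → φ.Eval E (Fin.snoc p x) → ¬ E x y)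
    {k : ℕ} (χ : SF (k + 1)) (hχ : χ.IsDelta0P) (P : Fin k → X)
    (hne : ∃ x, E x w ∧ χ.Eval E (Fin.snoc P x)) :
    ∃ y, E y w ∧ χ.Eval E (Fin.snoc P y) ∧
      ∀ x, E x w → χ.Eval E (Fin.snoc P x) → ¬ E x y := by
  have hkey : ∀ x : X, (SF.all (χ.rename Fin.castSucc)).Eval E (Fin.snoc P x) ↔
      χ.Eval E (Fin.snoc P x) := by
    intro x
    have h2 : ∀ z : X, (χ.rename Fin.castSucc).Eval E (Fin.snoc (Fin.snoc P x) z) ↔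
        χ.Eval E (Fin.snoc P x) := by
      intro z
      rw [SF.eval_rename]
      have h3 : (Fin.snoc (Fin.snoc P x) z : Fin (k+2) → X) ∘ Fin.castSucc =
          Fin.snoc P x := by
        funext i; simp [Fin.snoc_castSucc, Function.comp]
      rw [h3]
    constructor
    · intro h
      exact (h2 x).1 (h x)
    · intro h z
      exact (h2 z).2 h
  obtain ⟨x0, hx0, hχ0⟩ := hne
  obtain ⟨y, hyw, hy, hmin⟩ := hPi k (SF.all (χ.rename Fin.castSucc))
    ⟨χ.rename Fin.castSucc, SF.isDelta0P_rename _ _ hχ, rfl⟩ P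
    ⟨x0, hx0, (hkey x0).2 hχ0⟩
  exact ⟨y, hyw, (hkey y).1 hy,
    fun x hxw hx => hmin x hxw ((hkey x).2 hx)⟩

/-- Formula (context `[f, g, m]`, variable `i`): `i ∈ m` and `f, g` have differing
`y`-values at `i`. -/
def diffSF : SF 4 :=
  .and (.mem (Fin.last 3) ((Fin.last 2).castSucc))
   (exValOf ((Fin.last 0).castSucc.castSucc.castSucc)
     (.and (.eq ((Fin.last 4).castSucc.castSucc) ((Fin.last 3).castSucc.castSucc.castSucc))
       (exValOf ((Fin.last 1).castSucc.castSucc.castSucc.castSucc.castSucc)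
         (.and (.eq ((Fin.last 7).castSucc.castSucc)
             ((Fin.last 3).castSucc.castSucc.castSucc.castSucc.castSucc.castSucc))
           (.not (.eq ((Fin.last 8).castSucc)
             ((Fin.last 5).castSucc.castSucc.castSucc.castSucc)))))))

theorem diffSF_isDelta0P : diffSF.IsDelta0P :=
  ⟨trivial, exValOf_isDelta0P _ _ ⟨trivial, exValOf_isDelta0P _ _ ⟨trivial, trivial⟩⟩⟩

theorem eval_diffSF (hext : ExtensionalityAx E) (hpair : PairAx E)
    (z0 : Fin 0 → X) (f g m i : X) :
    diffSF.Eval E (Fin.snoc (Fin.snoc (Fin.snoc (Fin.snoc z0 f) g) m) i) ↔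
      (E i m ∧ ∃ i2 y2 v2, Val E f i2 y2 v2 ∧ (i2 = i ∧
        ∃ i3 y3 v3, Val E g i3 y3 v3 ∧ (i3 = i ∧ ¬ y3 = y2))) := by
  set V : Fin 4 → X := Fin.snoc (Fin.snoc (Fin.snoc (Fin.snoc z0 f) g) m) i with hV
  show (SF.Eval E (.mem _ _) V ∧ SF.Eval E (exValOf _ _) V) ↔ _
  apply and_congr
  · show E (V (Fin.last 3)) (V ((Fin.last 2).castSucc)) ↔ _
    simp only [hV, Fin.snoc_castSucc, Fin.snoc_last]
  · rw [eval_exValOf hext hpair]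
    have hf : V ((Fin.last 0).castSucc.castSucc.castSucc) = f := by
      simp only [hV, Fin.snoc_castSucc, Fin.snoc_last]
    rw [hf]
    refine exists_congr fun i2 => exists_congr fun y2 => exists_congr fun v2 =>
      and_congr_right fun _ => ?_
    set V7 : Fin 7 → X := Fin.snoc (Fin.snoc (Fin.snoc V i2) y2) v2 with hV7
    show (SF.Eval E (.eq _ _) V7 ∧ SF.Eval E (exValOf _ _) V7) ↔ _
    apply and_congr
    · show V7 ((Fin.last 4).castSucc.castSucc) = V7 ((Fin.last 3).castSucc.castSucc.castSucc) ↔ _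
      simp only [hV7, hV, Fin.snoc_castSucc, Fin.snoc_last]
    · rw [eval_exValOf hext hpair]
      have hg : V7 ((Fin.last 1).castSucc.castSucc.castSucc.castSucc.castSucc) = g := by
        simp only [hV7, hV, Fin.snoc_castSucc, Fin.snoc_last]
      rw [hg]
      refine exists_congr fun i3 => exists_congr fun y3 => exists_congr fun v3 =>
        and_congr_right fun _ => ?_
      set V10 : Fin 10 → X := Fin.snoc (Fin.snoc (Fin.snoc V7 i3) y3) v3 with hV10
      show (SF.Eval E (.eq _ _) V10 ∧ ¬ SF.Eval E (.eq _ _) V10) ↔ _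
      apply and_congr
      · show V10 ((Fin.last 7).castSucc.castSucc) =
            V10 ((Fin.last 3).castSucc.castSucc.castSucc.castSucc.castSucc.castSucc) ↔ _
        simp only [hV10, hV7, hV, Fin.snoc_castSucc, Fin.snoc_last]
      · show ¬ (V10 ((Fin.last 8).castSucc) =
            V10 ((Fin.last 5).castSucc.castSucc.castSucc.castSucc)) ↔ _
        simp only [hV10, hV7, hV, Fin.snoc_castSucc, Fin.snoc_last]

end LNP

section SC

variable {X : Type u} {E : X → X → Prop}

/-- Structural chain conditions, context `[w, a, m, f]`:
every entry `⟨i,⟨y,v⟩⟩ ∈ f` has `i ∈ m`, `y ∈ w`, `y = a` if `i` is empty,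
and successor indices carry predecessor values; and every `i ∈ m` has an entry. -/
def SCSF : SF 4 :=
  .and
    (allValOf (Fin.last 3)
      -- ctx 7 : [w a m f, i y vv]
      (.and (.mem ((Fin.last 4).castSucc.castSucc) ((Fin.last 2).castSucc.castSucc.castSucc.castSucc))
      (.and (.mem ((Fin.last 5).castSucc) ((Fin.last 0).castSucc.castSucc.castSucc.castSucc.castSucc.castSucc))
      (.and (.or (.bexMem ((Fin.last 4).castSucc.castSucc) (.eq (Fin.last 7) (Fin.last 7)))
                 (.eq ((Fin.last 5).castSucc) ((Fin.last 1).castSucc.castSucc.castSucc.castSucc.castSucc)))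
        (.ballMem ((Fin.last 2).castSucc.castSucc.castSucc.castSucc)
          -- ctx 8 : [... i'], i' = last 7
          (.or (.not (sfSuccOf ((Fin.last 4).castSucc.castSucc.castSucc) (Fin.last 7)))
            (allValOf ((Fin.last 3).castSucc.castSucc.castSucc.castSucc)
              -- ctx 11 : [..., i2 y2 v2]
              (.or (.not (.eq ((Fin.last 8).castSucc.castSucc) ((Fin.last 7).castSucc.castSucc.castSucc)))
                (sfSuccOf ((Fin.last 9).castSucc) ((Fin.last 5).castSucc.castSucc.castSucc.castSucc.castSucc))))))))))
    (.ballMem ((Fin.last 2).castSucc)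
      -- ctx 5 : [w a m f, i], i = last 4
      (exValOf ((Fin.last 3).castSucc)
        -- ctx 8 : [w a m f i, i2 y vv]
        (.eq ((Fin.last 5).castSucc.castSucc) ((Fin.last 4).castSucc.castSucc.castSucc))))

theorem SCSF_isDelta0 : SCSF.IsDelta0 :=
  ⟨allValOf_isDelta0 _ _
    ⟨trivial, trivial, ⟨trivial, trivial⟩,
      ⟨sfSuccOf_isDelta0 _ _, allValOf_isDelta0 _ _ ⟨trivial, sfSuccOf_isDelta0 _ _⟩⟩⟩,
   exValOf_isDelta0 _ _ trivial⟩

/-- Semantic counterpart of `SCSF`. -/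
def SCsem (E : X → X → Prop) (w a m f : X) : Prop :=
  (∀ i y vv, Val E f i y vv →
    (E i m ∧ (E y w ∧ (((∃ z, E z i ∧ z = z) ∨ y = a) ∧
      (∀ i', E i' m → (¬ SuccOf E i i' ∨
        ∀ i2 y2 v2, Val E f i2 y2 v2 → (¬ i2 = i' ∨ SuccOf E y2 y))))))) ∧
  (∀ i, E i m → ∃ i2 y vv, Val E f i2 y vv ∧ i2 = i)

theorem eval_SCSF (hext : ExtensionalityAx E) (hpair : PairAx E)
    (z0 : Fin 0 → X) (w a m f : X) :
    SCSF.Eval E (Fin.snoc (Fin.snoc (Fin.snoc (Fin.snoc z0 w) a) m) f) ↔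
      SCsem E w a m f := by
  set V : Fin 4 → X := Fin.snoc (Fin.snoc (Fin.snoc (Fin.snoc z0 w) a) m) f with hV
  show (SF.Eval E (allValOf _ _) V ∧ SF.Eval E (.ballMem _ _) V) ↔ _
  apply and_congr
  · rw [eval_allValOf hext hpair]
    have hfv : V (Fin.last 3) = f := by simp only [hV, Fin.snoc_last]
    rw [hfv]
    refine forall_congr' fun i => forall_congr' fun y => forall_congr' fun vv =>
      imp_congr_right fun _ => ?_
    set V7 : Fin 7 → X := Fin.snoc (Fin.snoc (Fin.snoc V i) y) vv with hV7
    show (SF.Eval E (.mem _ _) V7 ∧ SF.Eval E (.mem _ _) V7 ∧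
      (SF.Eval E (.bexMem _ _) V7 ∨ SF.Eval E (.eq _ _) V7) ∧
      SF.Eval E (.ballMem _ _) V7) ↔ _
    refine and_congr ?_ (and_congr ?_ (and_congr ?_ ?_))
    · show E (V7 _) (V7 _) ↔ _
      simp only [hV7, hV, Fin.snoc_castSucc, Fin.snoc_last]
    · show E (V7 _) (V7 _) ↔ _
      simp only [hV7, hV, Fin.snoc_castSucc, Fin.snoc_last]
    · apply or_congr
      · show (∃ z, E z (V7 _) ∧ _) ↔ _
        simp only [hV7, hV, SF.Eval, Fin.snoc_castSucc, Fin.snoc_last]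
      · show V7 _ = V7 _ ↔ _
        simp only [hV7, hV, Fin.snoc_castSucc, Fin.snoc_last]
    · show (∀ i', E i' (V7 _) → _) ↔ _
      have hmv : V7 ((Fin.last 2).castSucc.castSucc.castSucc.castSucc) = m := by
        simp only [hV7, hV, Fin.snoc_castSucc, Fin.snoc_last]
      rw [hmv]
      refine forall_congr' fun i' => imp_congr_right fun _ => ?_
      set V8 : Fin 8 → X := Fin.snoc V7 i' with hV8
      show (¬ SF.Eval E (sfSuccOf _ _) V8 ∨ SF.Eval E (allValOf _ _) V8) ↔ _
      apply or_congr
      · rw [eval_sfSuccOf]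
        simp only [hV8, hV7, hV, Fin.snoc_castSucc, Fin.snoc_last]
      · rw [eval_allValOf hext hpair]
        have hfv8 : V8 ((Fin.last 3).castSucc.castSucc.castSucc.castSucc) = f := by
          simp only [hV8, hV7, hV, Fin.snoc_castSucc, Fin.snoc_last]
        rw [hfv8]
        refine forall_congr' fun i2 => forall_congr' fun y2 => forall_congr' fun v2 =>
          imp_congr_right fun _ => ?_
        set V11 : Fin 11 → X := Fin.snoc (Fin.snoc (Fin.snoc V8 i2) y2) v2 with hV11
        show (¬ SF.Eval E (.eq _ _) V11 ∨ SF.Eval E (sfSuccOf _ _) V11) ↔ _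
        apply or_congr
        · show ¬ (V11 _ = V11 _) ↔ _
          simp only [hV11, hV8, hV7, hV, Fin.snoc_castSucc, Fin.snoc_last]
        · rw [eval_sfSuccOf]
          simp only [hV11, hV8, hV7, hV, Fin.snoc_castSucc, Fin.snoc_last]
  · show (∀ i, E i (V _) → _) ↔ _
    have hmv : V ((Fin.last 2).castSucc) = m := by
      simp only [hV, Fin.snoc_castSucc, Fin.snoc_last]
    rw [hmv]
    refine forall_congr' fun i => imp_congr_right fun _ => ?_
    set V5 : Fin 5 → X := Fin.snoc V i with hV5
    rw [eval_exValOf hext hpair]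
    have hfv5 : V5 ((Fin.last 3).castSucc) = f := by
      simp only [hV5, hV, Fin.snoc_castSucc, Fin.snoc_last]
    rw [hfv5]
    refine exists_congr fun i2 => exists_congr fun y => exists_congr fun vv =>
      and_congr_right fun _ => ?_
    set V8' : Fin 8 → X := Fin.snoc (Fin.snoc (Fin.snoc V5 i2) y) vv with hV8'
    show V8' _ = V8' _ ↔ _
    simp only [hV8', hV5, hV, Fin.snoc_castSucc, Fin.snoc_last]

end SC

section Det

variable {X : Type u} {E : X → X → Prop} {w : X}

theorem SCsem.val_mem {w a m f i y v : X} (h : SCsem E w a m f)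
    (hv : Val E f i y v) : E i m ∧ E y w :=
  ⟨(h.1 i y v hv).1, (h.1 i y v hv).2.1⟩

theorem SCsem.base {w a m f i y v : X} (h : SCsem E w a m f)
    (hv : Val E f i y v) (he : ∀ z, ¬ E z i) : y = a := by
  rcases (h.1 i y v hv).2.2.1 with ⟨z, hz, _⟩ | hy
  · exact absurd hz (he z)
  · exact hy

theorem SCsem.succ {w a m f i y v i' y' v' : X} (h : SCsem E w a m f)
    (hv : Val E f i y v) (hi' : E i' m) (hs : SuccOf E i i')
    (hv' : Val E f i' y' v') : SuccOf E y' y := by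
  rcases (h.1 i y v hv).2.2.2 i' hi' with hns | hall
  · exact absurd hs hns
  · rcases hall i' y' v' hv' with hne | hsucc
    · exact absurd rfl hne
    · exact hsucc

theorem SCsem.total {w a m f i : X} (h : SCsem E w a m f) (hi : E i m) :
    ∃ y v, Val E f i y v := by
  obtain ⟨i2, y, vv, hval, rfl⟩ := h.2 i hi
  exact ⟨y, vv, hval⟩

/-- Determinism: two structural chains of the same length have the same values. -/
theorem chain_det (hext : ExtensionalityAx E) (hpair : PairAx E)
    (hM : ModelMminus E) (hw : IsOmega E w)
    (hPi : ∀ (n : ℕ) (φ : SF (n + 1)), Pi1PC _ φ → ∀ p : Fin n → X,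
      (∃ x, E x w ∧ φ.Eval E (Fin.snoc p x)) →
      ∃ y, E y w ∧ φ.Eval E (Fin.snoc p y) ∧
        ∀ x, E x w → φ.Eval E (Fin.snoc p x) → ¬ E x y)
    {a m f g : X} (hmw : E m w) (hf : SCsem E w a m f) (hg : SCsem E w a m g) :
    ∀ i, E i m → ∀ y v y' v', Val E f i y v → Val E g i y' v' → y = y' := by
  by_contra hcon
  push_neg at hcon
  obtain ⟨i, him, y, v, y', v', hvf, hvg, hne⟩ := hcon
  set P : Fin 3 → X :=
    Fin.snoc (Fin.snoc (Fin.snoc (fun j : Fin 0 => j.elim0) f) g) m with hP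
  have heval : ∀ x : X, diffSF.Eval E (Fin.snoc P x) ↔
      (E x m ∧ ∃ i2 y2 v2, Val E f i2 y2 v2 ∧ (i2 = x ∧
        ∃ i3 y3 v3, Val E g i3 y3 v3 ∧ (i3 = x ∧ ¬ y3 = y2))) := fun x =>
    eval_diffSF hext hpair _ f g m x
  have hiw : E i w := mem_w_trans hM hw m hmw i him
  obtain ⟨i0, hi0w, hdiff0, hmin⟩ := lnp hPi diffSF diffSF_isDelta0P P
    ⟨i, hiw, (heval i).2 ⟨him, i, y, v, hvf, rfl, i, y', v', hvg, rfl, fun h => hne h.symm⟩⟩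
  rw [heval i0] at hdiff0
  obtain ⟨hi0m, i2, yf, vf, hvf0, heq2, i3, yg, vg, hvg0, heq3, hne0⟩ := hdiff0
  subst heq2
  subst heq3
  -- case: i2 empty
  by_cases hemp : ∃ z, E z i3
  · obtain ⟨z, hz⟩ := hemp
    obtain ⟨p, hpw, hps⟩ := mem_w_pred hM hw i3 hi0w ⟨z, hz⟩
    have hpm : E p m := mem_w_transSet hM hw m hmw i3 hi0m p (succOf_mem hps)
    obtain ⟨yp, vp, hvp⟩ := hf.total hpm
    obtain ⟨yp', vp', hvp'⟩ := hg.total hpm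
    have hpeq : yp = yp' := by
      by_contra hpne
      exact hmin p hpw ((heval p).2
        ⟨hpm, p, yp, vp, hvp, rfl, p, yp', vp', hvp', rfl, fun h => hpne h.symm⟩)
        (succOf_mem hps)
    have h1 : SuccOf E yf yp := hf.succ hvp hi0m hps hvf0
    have h2 : SuccOf E yg yp' := hg.succ hvp' hi0m hps hvg0
    rw [← hpeq] at h2
    have hyfw : E yf w := (hf.val_mem hvf0).2
    have hygw : E yg w := (hg.val_mem hvg0).2
    exact hne0 (pred_unique hM hw hygw hyfw h2 h1)
  · push_neg at hemp
    have h1 : yf = a := hf.base hvf0 hemp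
    have h2 : yg = a := hg.base hvg0 hemp
    exact hne0 (h2.trans h1.symm)

end Det

section Psi

variable {X : Type u} {E : X → X → Prop} {n : ℕ}

def rhoSC (n : ℕ) : Fin 4 → Fin (n + 4) :=
  Fin.snoc (Fin.snoc (Fin.snoc (Fin.snoc (fun j : Fin 0 => j.elim0)
    ((Fin.last n).castSucc.castSucc.castSucc))
    ((Fin.last (n+1)).castSucc.castSucc))
    ((Fin.last (n+2)).castSucc))
    (Fin.last (n+3))

def rho1 (n : ℕ) : Fin (n + 2) → Fin (n + 7) :=
  Fin.snoc (Fin.snoc (fun j : Fin n =>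
      j.castSucc.castSucc.castSucc.castSucc.castSucc.castSucc.castSucc)
    ((Fin.last (n+5)).castSucc)) (Fin.last (n+6))

def rho2 (n : ℕ) : Fin (n + 2) → Fin (n + 8) :=
  Fin.snoc (Fin.snoc (fun j : Fin n =>
      j.castSucc.castSucc.castSucc.castSucc.castSucc.castSucc.castSucc.castSucc)
    (Fin.last (n+7))) ((Fin.last (n+6)).castSucc)

/-- "every value-entry of `f` carries a witness at or below its `y`". -/
def psiSF (ψ : SF (n + 2)) : SF (n + 4) :=
  allValOf (Fin.last (n+3))
    (.or (ψ.rename (rho1 n))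
      (.bexMem ((Fin.last (n+5)).castSucc) (ψ.rename (rho2 n))))

/-- the full (Δ₀ᴾ) witnessed-chain formula, context `[p…, w, a, m, f]`. -/
def wchainSF (ψ : SF (n + 2)) : SF (n + 4) := .and (SCSF.rename (rhoSC n)) (psiSF ψ)

theorem wchainSF_isDelta0P (ψ : SF (n + 2)) (hψ : ψ.IsDelta0P) :
    (wchainSF ψ).IsDelta0P :=
  ⟨SF.isDelta0P_of_isDelta0 _ (SF.isDelta0_rename _ _ SCSF_isDelta0),
   allValOf_isDelta0P _ _ ⟨SF.isDelta0P_rename _ _ hψ, SF.isDelta0P_rename _ _ hψ⟩⟩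

def Witsem (E : X → X → Prop) (ψ : SF (n + 2)) (p : Fin n → X) (y vv : X) : Prop :=
  ψ.Eval E (Fin.snoc (Fin.snoc p y) vv) ∨
    ∃ x', E x' y ∧ ψ.Eval E (Fin.snoc (Fin.snoc p x') vv)

def WCsem (E : X → X → Prop) (ψ : SF (n + 2)) (p : Fin n → X) (w a m f : X) : Prop :=
  SCsem E w a m f ∧ ∀ i y vv, Val E f i y vv → Witsem E ψ p y vv

theorem comp_rhoSC (p : Fin n → X) (w a m f : X) :
    (Fin.snoc (Fin.snoc (Fin.snoc (Fin.snoc p w) a) m) f : Fin (n+4) → X) ∘ rhoSC n =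
      Fin.snoc (Fin.snoc (Fin.snoc (Fin.snoc (fun j : Fin 0 => j.elim0) w) a) m) f := by
  funext t
  refine Fin.lastCases ?_ (fun j => ?_) t
  · simp only [rhoSC, Function.comp, Fin.snoc_castSucc, Fin.snoc_last]
  · refine Fin.lastCases ?_ (fun j' => ?_) j
    · simp only [rhoSC, Function.comp, Fin.snoc_castSucc, Fin.snoc_last]
    · refine Fin.lastCases ?_ (fun j'' => ?_) j'
      · simp only [rhoSC, Function.comp, Fin.snoc_castSucc, Fin.snoc_last]
      · refine Fin.lastCases ?_ (fun j''' => ?_) j''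
        · simp only [rhoSC, Function.comp, Fin.snoc_castSucc, Fin.snoc_last]
        · exact j'''.elim0

theorem comp_rho1 (p : Fin n → X) (w a m f i y vv : X) :
    (Fin.snoc (Fin.snoc (Fin.snoc (Fin.snoc (Fin.snoc (Fin.snoc (Fin.snoc p w) a) m) f) i)
      y) vv : Fin (n+7) → X) ∘ rho1 n = Fin.snoc (Fin.snoc p y) vv := by
  funext t
  refine Fin.lastCases ?_ (fun j => ?_) t
  · simp only [rho1, Function.comp, Fin.snoc_castSucc, Fin.snoc_last]
  · refine Fin.lastCases ?_ (fun j' => ?_) j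
    · simp only [rho1, Function.comp, Fin.snoc_castSucc, Fin.snoc_last]
    · simp only [rho1, Function.comp, Fin.snoc_castSucc, Fin.snoc_last]

theorem comp_rho2 (p : Fin n → X) (w a m f i y vv x' : X) :
    (Fin.snoc (Fin.snoc (Fin.snoc (Fin.snoc (Fin.snoc (Fin.snoc (Fin.snoc (Fin.snoc p w) a)
      m) f) i) y) vv) x' : Fin (n+8) → X) ∘ rho2 n = Fin.snoc (Fin.snoc p x') vv := by
  funext t
  refine Fin.lastCases ?_ (fun j => ?_) t
  · simp only [rho2, Function.comp, Fin.snoc_castSucc, Fin.snoc_last]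
  · refine Fin.lastCases ?_ (fun j' => ?_) j
    · simp only [rho2, Function.comp, Fin.snoc_castSucc, Fin.snoc_last]
    · simp only [rho2, Function.comp, Fin.snoc_castSucc, Fin.snoc_last]

theorem eval_wchainSF (hext : ExtensionalityAx E) (hpair : PairAx E)
    (ψ : SF (n + 2)) (p : Fin n → X) (w a m f : X) :
    (wchainSF ψ).Eval E (Fin.snoc (Fin.snoc (Fin.snoc (Fin.snoc p w) a) m) f) ↔
      WCsem E ψ p w a m f := by
  show (SF.Eval E (SF.rename _ SCSF) _ ∧ SF.Eval E (psiSF ψ) _) ↔ _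
  apply and_congr
  · rw [SF.eval_rename, comp_rhoSC, eval_SCSF hext hpair]
  · show SF.Eval E (allValOf _ _) _ ↔ _
    rw [eval_allValOf hext hpair]
    have hfv : (Fin.snoc (Fin.snoc (Fin.snoc (Fin.snoc p w) a) m) f : Fin (n+4) → X)
        (Fin.last (n+3)) = f := Fin.snoc_last _ _
    rw [hfv]
    refine forall_congr' fun i => forall_congr' fun y => forall_congr' fun vv =>
      imp_congr_right fun _ => ?_
    show (SF.Eval E (SF.rename _ ψ) _ ∨ ∃ x', E x' _ ∧ SF.Eval E (SF.rename _ ψ) _) ↔ _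
    apply or_congr
    · rw [SF.eval_rename, comp_rho1]
    · refine exists_congr fun x' => and_congr ?_ ?_
      · show E x' ((Fin.snoc (Fin.snoc (Fin.snoc (Fin.snoc (Fin.snoc (Fin.snoc (Fin.snoc p w)
            a) m) f) i) y) vv : Fin (n+7) → X) ((Fin.last (n+5)).castSucc)) ↔ E x' y
        simp only [Fin.snoc_castSucc, Fin.snoc_last]
      · rw [SF.eval_rename, comp_rho2]

end Psi

section ChainBuild

variable {X : Type u} {E : X → X → Prop} {w : X} {n : ℕ}

theorem chain_base (hext : ExtensionalityAx E) (hpair : PairAx E)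
    {ψ : SF (n + 2)} {p : Fin n → X} {a z0 eh m' : X}
    (haw : E a w) (hd : ψ.Eval E (Fin.snoc (Fin.snoc p a) z0))
    (he : ∀ z, ¬ E z eh) (hs : SuccOf E eh m') :
    ∃ f, WCsem E ψ p w a m' f := by
  obtain ⟨u, hu⟩ := pair_exists hpair hext a z0
  obtain ⟨q, hq⟩ := pair_exists hpair hext eh u
  obtain ⟨f, hf⟩ := hpair q q
  have hmemf : ∀ z, E z f ↔ z = q := fun z => by rw [hf]; tauto
  have hval : ∀ i y v, Val E f i y v → i = eh ∧ y = a ∧ v = z0 := by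
    rintro i y v ⟨q', u', hq'f, hp1, hp2⟩
    have hqq : q' = q := (hmemf q').1 hq'f
    rw [hqq] at hp1
    obtain ⟨hi, hu'⟩ := isPair_inj hext hpair hp1 hq
    rw [hu'] at hp2
    obtain ⟨hy, hv⟩ := isPair_inj hext hpair hp2 hu
    exact ⟨hi, hy, hv⟩
  have hvale : Val E f eh a z0 := ⟨q, u, (hmemf q).2 rfl, hq, hu⟩
  refine ⟨f, ⟨?_, ?_⟩, ?_⟩
  · rintro i y v hv
    obtain ⟨rfl, rfl, rfl⟩ := hval i y v hv
    refine ⟨succOf_mem hs, haw, Or.inr rfl, ?_⟩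
    intro i' hi'm'
    left
    intro hsucc
    rcases (hs i').1 hi'm' with h | rfl
    · exact he i' h
    · exact he i' (succOf_mem hsucc)
  · intro i him'
    rcases (hs i).1 him' with h | rfl
    · exact absurd h (he i)
    · exact ⟨i, a, z0, hvale, rfl⟩
  · rintro i y v hv
    obtain ⟨rfl, rfl, rfl⟩ := hval i y v hv
    exact Or.inl hd

theorem chain_ext (hext : ExtensionalityAx E) (hpair : PairAx E)
    (hM : ModelMminus E) (hw : IsOmega E w)
    {ψ : SF (n + 2)} {p : Fin n → X} {a m m' f qh py v'' : X}
    (hWC : WCsem E ψ p w a m f)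
    (hmw : E m w) (hsm : SuccOf E m m') (hmne : ∃ z, E z m)
    (hqs : SuccOf E qh m)
    (hall : ∀ y v, Val E f qh y v → SuccOf E py y)
    (hwit : Witsem E ψ p py v'') (hpyw : E py w) :
    ∃ f', WCsem E ψ p w a m' f' ∧ Val E f' m py v'' := by
  obtain ⟨u, hu⟩ := pair_exists hpair hext py v''
  obtain ⟨qn, hqn⟩ := pair_exists hpair hext m u
  obtain ⟨sq, hsq⟩ := hpair qn qn
  obtain ⟨pa, hpa⟩ := hpair f sq
  obtain ⟨f', hf'⟩ := hM.2.2.2.1 pa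
  have hmemf' : ∀ z, E z f' ↔ (E z f ∨ z = qn) := by
    intro z; rw [hf']
    constructor
    · rintro ⟨t, htpa, hzt⟩
      rcases (hpa t).1 htpa with rfl | rfl
      · exact Or.inl hzt
      · rw [hsq] at hzt; right; tauto
    · rintro (h | rfl)
      · exact ⟨f, (hpa f).2 (Or.inl rfl), h⟩
      · exact ⟨sq, (hpa sq).2 (Or.inr rfl), (hsq z).2 (Or.inl rfl)⟩
  have hvalf' : ∀ i y v, Val E f' i y v ↔
      (Val E f i y v ∨ (i = m ∧ y = py ∧ v = v'')) := by
    intro i y v; constructor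
    · rintro ⟨q', u', hq'f', hp1, hp2⟩
      rcases (hmemf' q').1 hq'f' with h | rfl
      · exact Or.inl ⟨q', u', h, hp1, hp2⟩
      · obtain ⟨hi, hu'⟩ := isPair_inj hext hpair hp1 hqn
        rw [hu'] at hp2
        obtain ⟨hy, hv⟩ := isPair_inj hext hpair hp2 hu
        exact Or.inr ⟨hi, hy, hv⟩
    · rintro (⟨q', u', hq'f, hp1, hp2⟩ | ⟨rfl, rfl, rfl⟩)
      · exact ⟨q', u', (hmemf' q').2 (Or.inl hq'f), hp1, hp2⟩
      · exact ⟨qn, u, (hmemf' qn).2 (Or.inr rfl), hqn, hu⟩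
  have hnewval : Val E f' m py v'' := (hvalf' m py v'').2 (Or.inr ⟨rfl, rfl, rfl⟩)
  have hmm : ¬ E m m := mem_w_irrefl hM hw m hmw
  have htm : TransSet E m := mem_w_transSet hM hw m hmw
  refine ⟨f', ⟨⟨?_, ?_⟩, ?_⟩, hnewval⟩
  · rintro i y v hv
    rcases (hvalf' i y v).1 hv with hold | ⟨rfl, rfl, rfl⟩
    · obtain ⟨him, hyw, hbase, hsucc'⟩ := hWC.1.1 i y v hold
      refine ⟨(hsm i).2 (Or.inl him), hyw, hbase, ?_⟩
      intro i' hi'm'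
      rcases (hsm i').1 hi'm' with hi'm | rfl
      · rcases hsucc' i' hi'm with hns | hallv
        · exact Or.inl hns
        · right
          rintro i2 y2 v2 hv2
          rcases (hvalf' i2 y2 v2).1 hv2 with hold2 | ⟨rfl, rfl, rfl⟩
          · exact hallv i2 y2 v2 hold2
          · left; rintro rfl; exact hmm hi'm
      · by_cases hsim : SuccOf E i i'
        · right
          have hiq : i = qh := pred_unique hM hw (mem_w_trans hM hw i' hmw i him)
            (mem_w_trans hM hw i' hmw qh (succOf_mem hqs)) hsim hqs
          rintro i2 y2 v2 hv2
          rcases (hvalf' i2 y2 v2).1 hv2 with hold2 | ⟨rfl, rfl, rfl⟩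
          · left; rintro rfl
            exact hmm (hWC.1.1 _ _ _ hold2).1
          · right
            exact hall y v (hiq ▸ hold)
        · exact Or.inl hsim
    · refine ⟨succOf_mem hsm, hpyw, Or.inl ?_, ?_⟩
      · obtain ⟨z, hz⟩ := hmne; exact ⟨z, hz, rfl⟩
      · intro i' hi'm'
        left
        intro hsucc2
        have h1 : E i i' := succOf_mem hsucc2
        rcases (hsm i').1 hi'm' with h | heq
        · exact hmm (htm i' h i h1)
        · exact hmm (heq ▸ h1)
  · intro i him'
    rcases (hsm i).1 him' with h | rfl
    · obtain ⟨i2, y, vv, hv, heq⟩ := hWC.1.2 i h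
      exact ⟨i2, y, vv, (hvalf' i2 y vv).2 (Or.inl hv), heq⟩
    · exact ⟨i, py, v'', hnewval, rfl⟩
  · rintro i y v hv
    rcases (hvalf' i y v).1 hv with hold | ⟨rfl, rfl, rfl⟩
    · exact hWC.2 i y v hold
    · exact hwit

end ChainBuild

section Lasts

variable {X : Type u} {E : X → X → Prop}

def rhoL : Fin 4 → Fin 6 :=
  Fin.snoc (Fin.snoc (Fin.snoc (Fin.snoc (fun j : Fin 0 => j.elim0)
    ((Fin.last 1).castSucc.castSucc.castSucc.castSucc))
    ((Fin.last 2).castSucc.castSucc.castSucc))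
    (Fin.last 5))
    ((Fin.last 4).castSucc)

/-- Separation formula, context `[c, w, a]`, variable `y`:
"`y` is the last value of some structural chain in `c`". -/
def lastsSF : SF 4 :=
  .bexMem ((Fin.last 0).castSucc.castSucc.castSucc)
  (.bexMem ((Fin.last 1).castSucc.castSucc.castSucc)
    (.and (SCSF.rename rhoL)
      (.and (.bexMem (Fin.last 5) (.eq (Fin.last 6) (Fin.last 6)))
        (.bexMem (Fin.last 5)
          (.and (sfSuccOf (Fin.last 6) ((Fin.last 5).castSucc))
            (exValOf ((Fin.last 4).castSucc.castSucc)
              (.and (.eq ((Fin.last 7).castSucc.castSucc)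
                  ((Fin.last 6).castSucc.castSucc.castSucc))
                (.eq ((Fin.last 8).castSucc)
                  ((Fin.last 3).castSucc.castSucc.castSucc.castSucc.castSucc.castSucc)))))))))

theorem lastsSF_isDelta0 : lastsSF.IsDelta0 :=
  ⟨SF.isDelta0_rename _ _ SCSF_isDelta0, trivial,
    ⟨sfSuccOf_isDelta0 _ _, exValOf_isDelta0 _ _ ⟨trivial, trivial⟩⟩⟩

def lastsSem (E : X → X → Prop) (c w a y : X) : Prop :=
  ∃ f, E f c ∧ ∃ m, E m w ∧ (SCsem E w a m f ∧ ((∃ z, E z m ∧ z = z) ∧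
    ∃ i, E i m ∧ (SuccOf E i m ∧
      ∃ i2 y2 v2, Val E f i2 y2 v2 ∧ (i2 = i ∧ y2 = y))))

theorem comp_rhoL (z0 : Fin 0 → X) (c w a y f m : X) :
    (Fin.snoc (Fin.snoc (Fin.snoc (Fin.snoc (Fin.snoc (Fin.snoc z0 c) w) a) y) f) m :
      Fin 6 → X) ∘ rhoL =
      Fin.snoc (Fin.snoc (Fin.snoc (Fin.snoc (fun j : Fin 0 => j.elim0) w) a) m) f := by
  funext t
  refine Fin.lastCases ?_ (fun j => ?_) t
  · simp only [rhoL, Function.comp, Fin.snoc_castSucc, Fin.snoc_last]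
  · refine Fin.lastCases ?_ (fun j' => ?_) j
    · simp only [rhoL, Function.comp, Fin.snoc_castSucc, Fin.snoc_last]
    · refine Fin.lastCases ?_ (fun j'' => ?_) j'
      · simp only [rhoL, Function.comp, Fin.snoc_castSucc, Fin.snoc_last]
      · refine Fin.lastCases ?_ (fun j''' => ?_) j''
        · simp only [rhoL, Function.comp, Fin.snoc_castSucc, Fin.snoc_last]
        · exact j'''.elim0

theorem eval_lastsSF (hext : ExtensionalityAx E) (hpair : PairAx E)
    (z0 : Fin 0 → X) (c w a y : X) :
    lastsSF.Eval E (Fin.snoc (Fin.snoc (Fin.snoc (Fin.snoc z0 c) w) a) y) ↔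
      lastsSem E c w a y := by
  set V : Fin 4 → X := Fin.snoc (Fin.snoc (Fin.snoc (Fin.snoc z0 c) w) a) y with hV
  show (∃ f, E f (V _) ∧ _) ↔ _
  have hc : V ((Fin.last 0).castSucc.castSucc.castSucc) = c := by
    simp only [hV, Fin.snoc_castSucc, Fin.snoc_last]
  rw [hc]
  refine exists_congr fun f => and_congr_right fun _ => ?_
  set V5 : Fin 5 → X := Fin.snoc V f with hV5
  show (∃ m, E m (V5 _) ∧ _) ↔ _
  have hw5 : V5 ((Fin.last 1).castSucc.castSucc.castSucc) = w := by
    simp only [hV5, hV, Fin.snoc_castSucc, Fin.snoc_last]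
  rw [hw5]
  refine exists_congr fun m => and_congr_right fun _ => ?_
  set V6 : Fin 6 → X := Fin.snoc V5 m with hV6
  show (SF.Eval E (SF.rename _ SCSF) V6 ∧ (∃ z, E z (V6 _) ∧ _) ∧
    (∃ i, E i (V6 _) ∧ _)) ↔ _
  refine and_congr ?_ (and_congr ?_ ?_)
  · rw [SF.eval_rename]
    have : V6 ∘ rhoL =
        Fin.snoc (Fin.snoc (Fin.snoc (Fin.snoc (fun j : Fin 0 => j.elim0) w) a) m) f := by
      rw [hV6, hV5, hV]; exact comp_rhoL z0 c w a y f m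
    rw [this, eval_SCSF hext hpair]
  · refine exists_congr fun z => and_congr ?_ ?_
    · show E z (V6 (Fin.last 5)) ↔ E z m
      simp only [hV6, Fin.snoc_last]
    · exact iff_of_true rfl rfl
  · refine exists_congr fun i => and_congr ?_ ?_
    · show E i (V6 (Fin.last 5)) ↔ E i m
      simp only [hV6, Fin.snoc_last]
    · set V7 : Fin 7 → X := Fin.snoc V6 i with hV7
      show (SF.Eval E (sfSuccOf _ _) V7 ∧ SF.Eval E (exValOf _ _) V7) ↔ _
      apply and_congr
      · rw [eval_sfSuccOf]
        simp only [hV7, hV6, Fin.snoc_castSucc, Fin.snoc_last]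
      · rw [eval_exValOf hext hpair]
        have hf7 : V7 ((Fin.last 4).castSucc.castSucc) = f := by
          simp only [hV7, hV6, hV5, Fin.snoc_castSucc, Fin.snoc_last]
        rw [hf7]
        refine exists_congr fun i2 => exists_congr fun y2 => exists_congr fun v2 =>
          and_congr_right fun _ => ?_
        set V10 : Fin 10 → X := Fin.snoc (Fin.snoc (Fin.snoc V7 i2) y2) v2 with hV10
        show (V10 _ = V10 _ ∧ V10 _ = V10 _) ↔ _
        apply and_congr
        · show V10 ((Fin.last 7).castSucc.castSucc) =
              V10 ((Fin.last 6).castSucc.castSucc.castSucc) ↔ _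
          simp only [hV10, hV7, Fin.snoc_castSucc, Fin.snoc_last]
        · show V10 ((Fin.last 8).castSucc) =
              V10 ((Fin.last 3).castSucc.castSucc.castSucc.castSucc.castSucc.castSucc) ↔ _
          simp only [hV10, hV7, hV6, hV5, hV, Fin.snoc_castSucc, Fin.snoc_last]

end Lasts

/-- over `M⁻ + Δ₀^𝒫-Collection`, `Π₁^𝒫`-Foundation on `ω` implies
`Σ₁^𝒫`-Foundation on `ω`. -/
theorem sigma1P_foundation_omega_of_pi1P (X : Type u) (E : X → X → Prop)
    (hM : ModelMminus E) (hColl : CollectionScheme E Delta0PC)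
    (w : X) (hw : IsOmega E w)
    (hPi : ∀ (n : ℕ) (φ : SF (n + 1)), Pi1PC _ φ → ∀ p : Fin n → X,
      (∃ x, E x w ∧ φ.Eval E (Fin.snoc p x)) →
      ∃ y, E y w ∧ φ.Eval E (Fin.snoc p y) ∧
        ∀ x, E x w → φ.Eval E (Fin.snoc p x) → ¬ E x y) :
    ∀ (n : ℕ) (φ : SF (n + 1)), Sigma1PC _ φ → ∀ p : Fin n → X,
      (∃ x, E x w ∧ φ.Eval E (Fin.snoc p x)) →
      ∃ y, E y w ∧ φ.Eval E (Fin.snoc p y) ∧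
        ∀ x, E x w → φ.Eval E (Fin.snoc p x) → ¬ E x y := by
  intro n φ hσ p hne
  obtain ⟨ψ, hψ, rfl⟩ := hσ
  have hext : ExtensionalityAx E := hM.1
  have hpair : PairAx E := hM.2.2.1
  obtain ⟨a, haw, ha⟩ := hne
  have ha' : ∃ z, ψ.Eval E (Fin.snoc (Fin.snoc p a) z) := ha
  obtain ⟨z0, hδa⟩ := ha'
  by_contra h0
  push_neg at h0
  -- the "no minimal element" hypothesis
  have hstar : ∀ y, E y w → (SF.ex ψ).Eval E (Fin.snoc p y) →
      ∃ x, E x w ∧ (SF.ex ψ).Eval E (Fin.snoc p x) ∧ E x y := h0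
  -- from a Wit at y, produce a Wit at the predecessor of y
  have hkey : ∀ yq v, E yq w → Witsem E ψ p yq v →
      ∃ py v'', SuccOf E py yq ∧ Witsem E ψ p py v'' ∧ E py w := by
    intro yq v hyqw hwit
    have hx' : ∃ x' z', E x' yq ∧ ψ.Eval E (Fin.snoc (Fin.snoc p x') z') := by
      rcases hwit with hδ | ⟨x', hx'y, hδ'⟩
      · obtain ⟨x', hx'w, hEv, hx'y⟩ := hstar yq hyqw ⟨v, hδ⟩
        have hEv' : ∃ z', ψ.Eval E (Fin.snoc (Fin.snoc p x') z') := hEv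
        obtain ⟨z', hz'⟩ := hEv'
        exact ⟨x', z', hx'y, hz'⟩
      · exact ⟨x', v, hx'y, hδ'⟩
    obtain ⟨x', z', hx'y, hδ'⟩ := hx'
    obtain ⟨py, hpyw, hpys⟩ := mem_w_pred hM hw yq hyqw ⟨x', hx'y⟩
    rcases (hpys x').1 hx'y with h | heq
    · exact ⟨py, z', hpys, Or.inr ⟨x', h, hδ'⟩, hpyw⟩
    · exact ⟨py, z', hpys, Or.inl (heq ▸ hδ'), hpyw⟩
  have hevalW : ∀ (x f : X), (wchainSF ψ).Eval E
      (Fin.snoc (Fin.snoc (Fin.snoc (Fin.snoc p w) a) x) f) ↔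
      WCsem E ψ p w a x f := fun x f => eval_wchainSF hext hpair ψ p w a x f
  -- Step 1: for every m ∈ ω there is a witnessed chain of length m
  have hnoL : ∀ m, E m w → ∃ f, WCsem E ψ p w a m f := by
    intro m hmw
    by_contra hbad
    push_neg at hbad
    have hΦ : ∀ x : X, (SF.all (SF.not (wchainSF ψ))).Eval E
        (Fin.snoc (Fin.snoc (Fin.snoc p w) a) x) ↔
        ∀ f, ¬ WCsem E ψ p w a x f := by
      intro x
      constructor
      · intro h f hWC
        exact h f ((hevalW x f).2 hWC)
      · intro h f hEv
        exact h f ((hevalW x f).1 hEv)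
    obtain ⟨l, hlw, hlev, hmin⟩ := hPi (n+2) (SF.all (SF.not (wchainSF ψ)))
      ⟨SF.not (wchainSF ψ), wchainSF_isDelta0P ψ hψ, rfl⟩
      (Fin.snoc (Fin.snoc p w) a) ⟨m, hmw, (hΦ m).2 hbad⟩
    have hlno : ∀ f, ¬ WCsem E ψ p w a l f := (hΦ l).1 hlev
    have hlne : ∃ t, E t l := by
      by_contra hno
      push_neg at hno
      obtain ⟨e0, he0w, he0⟩ := hw.1.1
      apply hlno e0
      refine ⟨⟨?_, ?_⟩, ?_⟩
      · rintro i y v ⟨q, u, hq, _, _⟩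
        exact absurd hq (he0 q)
      · intro i hi
        exact absurd hi (hno i)
      · rintro i y v ⟨q, u, hq, _, _⟩
        exact absurd hq (he0 q)
    obtain ⟨ph, hphw, hphs⟩ := mem_w_pred hM hw l hlw hlne
    have hph : ∃ f, WCsem E ψ p w a ph f := by
      by_contra hnof
      push_neg at hnof
      exact hmin ph hphw ((hΦ ph).2 hnof) (succOf_mem hphs)
    obtain ⟨f, hf⟩ := hph
    by_cases hphe : ∃ z, E z ph
    · obtain ⟨qh, hqhw, hqhs⟩ := mem_w_pred hM hw ph hphw hphe
      have hqhm : E qh ph := succOf_mem hqhs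
      obtain ⟨yq, vq, hval⟩ := hf.1.total hqhm
      have hyqw : E yq w := (hf.1.val_mem hval).2
      obtain ⟨py, v'', hpys, hwit', hpyw⟩ := hkey yq vq hyqw (hf.2 qh yq vq hval)
      have hdet := chain_det hext hpair hM hw hPi hphw hf.1 hf.1
      have hall : ∀ y v, Val E f qh y v → SuccOf E py y := by
        intro y v hv
        have heq : y = yq := hdet qh hqhm y v yq vq hv hval
        rw [heq]; exact hpys
      obtain ⟨f', hf', -⟩ := chain_ext hext hpair hM hw hf hphw hphs hphe hqhs hall hwit' hpyw
      exact hlno f' hf'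
    · push_neg at hphe
      obtain ⟨f1, hf1⟩ := chain_base hext hpair haw hδa hphe hphs
      exact hlno f1 hf1
  -- Step 2: collect chains of all lengths into one set c
  obtain ⟨c, hc⟩ := hColl (n+2) (wchainSF ψ) (wchainSF_isDelta0P ψ hψ)
    (Fin.snoc (Fin.snoc p w) a) w
    (fun m hmw => by
      obtain ⟨f, hf⟩ := hnoL m hmw
      exact ⟨f, (hevalW m f).2 hf⟩)
  have hcc : ∀ m, E m w → ∃ g, E g c ∧ WCsem E ψ p w a m g := by
    intro m hmw
    obtain ⟨g, hgc, hgev⟩ := hc m hmw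
    exact ⟨g, hgc, (hevalW m g).1 hgev⟩
  -- Step 3: the set of last values of chains in c
  have sep := hM.2.2.2.2.2.2.2.1
  obtain ⟨L, hL⟩ := sep 3 lastsSF lastsSF_isDelta0
    (Fin.snoc (Fin.snoc (Fin.snoc (fun j : Fin 0 => j.elim0) c) w) a) w
  have hLiff : ∀ y, E y L ↔ (E y w ∧ lastsSem E c w a y) := by
    intro y
    rw [hL y, eval_lastsSF hext hpair]
  -- Step 4: a ∈ L
  obtain ⟨e0, he0w, he0⟩ := hw.1.1
  obtain ⟨s1, hs1w, hs1s⟩ := hw.1.2 e0 he0w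
  obtain ⟨g1, hg1c, hg1⟩ := hcc s1 hs1w
  have he0s1 : E e0 s1 := succOf_mem hs1s
  obtain ⟨y1, v1, hval1⟩ := hg1.1.total he0s1
  have hy1a : y1 = a := hg1.1.base hval1 he0
  have haL : E a L := (hLiff a).2 ⟨haw, g1, hg1c, s1, hs1w, hg1.1, ⟨e0, he0s1, rfl⟩,
    e0, he0s1, hs1s, e0, y1, v1, hval1, rfl, hy1a⟩
  -- Step 5: a minimal element of L yields a contradiction
  have hfound := hM.2.2.2.2.2.2.2.2
  obtain ⟨b, hbL, hbmin⟩ := hfound L ⟨a, haL⟩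
  obtain ⟨hbw, fk, hfkc, mk, hmkw, hSCfk, -, ik, hikm, hiks, i2, y2, v2, hvalfk, heqi, heqy⟩ :=
    (hLiff b).1 hbL
  have hvalfk' : Val E fk ik y2 v2 := heqi ▸ hvalfk
  obtain ⟨g, hgc, hg⟩ := hcc mk hmkw
  have hdet1 := chain_det hext hpair hM hw hPi hmkw hSCfk hg.1
  obtain ⟨yg, vg, hvalg⟩ := hg.1.total hikm
  have hygb : yg = b := by
    have h1 : y2 = yg := hdet1 ik hikm y2 v2 yg vg hvalfk' hvalg
    rw [← h1, heqy]
  have hwitb : Witsem E ψ p b vg := hygb ▸ hg.2 ik yg vg hvalg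
  obtain ⟨py, v'', hpys, hwit', hpyw⟩ := hkey b vg hbw hwitb
  obtain ⟨mh, hmhw, hmhs⟩ := hw.1.2 mk hmkw
  have hdetg := chain_det hext hpair hM hw hPi hmkw hg.1 hg.1
  have hallg : ∀ y v, Val E g ik y v → SuccOf E py y := by
    intro y v hv
    have heq : y = yg := hdetg ik hikm y v yg vg hv hvalg
    rw [heq, hygb]; exact hpys
  obtain ⟨f2, hf2, hval2⟩ := chain_ext hext hpair hM hw hg hmkw hmhs ⟨ik, hikm⟩ hiks
    hallg hwit' hpyw
  obtain ⟨hch, hhc, hh⟩ := hcc mh hmhw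
  have hmkmh : E mk mh := succOf_mem hmhs
  have hdet2 := chain_det hext hpair hM hw hPi hmhw hf2.1 hh.1
  obtain ⟨yh, vh, hvalh⟩ := hh.1.total hmkmh
  have hpyyh : py = yh := hdet2 mk hmkmh py v'' yh vh hval2 hvalh
  have hpyL : E py L := (hLiff py).2 ⟨hpyw, hch, hhc, mh, hmhw, hh.1, ⟨mk, hmkmh, rfl⟩,
    mk, hmkmh, hmhs, mk, yh, vh, hvalh, rfl, hpyyh.symm⟩
  exact hbmin py (succOf_mem hpys) hpyL
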